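/- arXiv:1211.3715 — 5 statements merged into one kernel-verified Lean document; each statement's English description precedes it below -/
import Mathlib

section
/- Let A ⊆ ℝⁿ be a lattice polytope (the convex hull of a finite subset of ℤⁿ) of dimension n, with n ≥ 1. Then the dilated polytope (n−1)·A is normal: for every integer k ≥ 1, every lattice point of k·((n−1)·A) is a sum of k lattice points of (n−1)·A. -/
set_option maxHeartbeats 1000000

open scoped Pointwise

noncomputable section

def coeR {n : ℕ} (v : Fin n → ℤ) : Fin n → ℝ := fun i => (v i : ℝ)

namespace S7

open Finset

variable {n : ℕ}

lemma coeR_injective : Function.Injective (coeR (n := n)) := by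
  intro a b h
  funext i
  have := congrFun h i
  simpa [coeR] using this

lemma coeR_zero : coeR (0 : Fin n → ℤ) = 0 := by
  funext i; simp [coeR]

lemma coeR_sub (a b : Fin n → ℤ) : coeR (a - b) = coeR a - coeR b := by
  funext i; simp [coeR]

lemma coeR_add (a b : Fin n → ℤ) : coeR (a + b) = coeR a + coeR b := by
  funext i; simp [coeR]

lemma coeR_zsmul (j : ℤ) (a : Fin n → ℤ) : coeR (j • a) = (j : ℝ) • coeR a := by
  funext i; simp [coeR]

lemma coeR_intsum (T : Finset (Fin n → ℤ)) (c : (Fin n → ℤ) → ℤ) :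
    coeR (∑ x ∈ T, c x • x) = ∑ x ∈ T, (c x : ℝ) • coeR x := by
  funext i
  simp only [coeR, Finset.sum_apply, Pi.smul_apply, smul_eq_mul]
  push_cast
  rfl

/-- A representation of an integer point as a nonnegative combination, with total
weight `t`, of affinely independent lattice points of `V`. -/
def GoodRep (V : Finset (Fin n → ℤ)) (t : ℝ) (v : Fin n → ℤ) : Prop :=
  ∃ T : Finset (Fin n → ℤ), T ⊆ V ∧ AffineIndependent ℝ (fun p : T => coeR p.1) ∧
    ∃ μ : (Fin n → ℤ) → ℝ, (∀ x ∈ T, 0 ≤ μ x) ∧ (∑ x ∈ T, μ x) = t ∧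
      (∑ x ∈ T, μ x • coeR x) = coeR v

lemma unique_weights {T : Finset (Fin n → ℤ)}
    (hind : AffineIndependent ℝ (fun p : T => coeR p.1)) {w : (Fin n → ℤ) → ℝ}
    (h0 : ∑ x ∈ T, w x = 0) (h1 : ∑ x ∈ T, w x • coeR x = 0) :
    ∀ x ∈ T, w x = 0 := by
  rw [affineIndependent_iff] at hind
  intro x hx
  have := hind Finset.univ (fun p => w p.1) (by rw [← h0]; exact Finset.sum_attach T w)
    (by rw [← h1]; exact Finset.sum_attach T (fun x => w x • coeR x)) ⟨x, hx⟩ (Finset.mem_univ _)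
  exact this

lemma card_le_of_ind {T : Finset (Fin n → ℤ)}
    (hind : AffineIndependent ℝ (fun p : T => coeR p.1)) : T.card ≤ n + 1 := by
  have h := hind.card_le_finrank_succ
  rw [Fintype.card_coe] at h
  refine h.trans ?_
  have h2 : Module.finrank ℝ ↥(vectorSpan ℝ (Set.range fun p : T => coeR p.1)) ≤
      Module.finrank ℝ (Fin n → ℝ) := Submodule.finrank_le _
  rw [Module.finrank_pi, Fintype.card_fin] at h2
  omega

lemma pick_nat {α : Type*} [DecidableEq α] (s : Finset α) (F : α → ℕ) :
    ∀ t : ℕ, t ≤ ∑ x ∈ s, F x → ∃ g : α → ℕ, (∀ x, g x ≤ F x) ∧ (∑ x ∈ s, g x) = t := by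
  intro t
  induction t with
  | zero => exact fun _ => ⟨fun _ => 0, fun x => Nat.zero_le _, by simp⟩
  | succ t ih =>
    intro ht
    obtain ⟨g, hg1, hg2⟩ := ih (by omega)
    have hex : ∃ x ∈ s, g x < F x := by
      by_contra hcon
      push_neg at hcon
      have : ∑ x ∈ s, F x ≤ ∑ x ∈ s, g x := Finset.sum_le_sum hcon
      omega
    obtain ⟨x₀, hx₀s, hx₀⟩ := hex
    refine ⟨Function.update g x₀ (g x₀ + 1), fun x => ?_, ?_⟩
    · rcases eq_or_ne x x₀ with rfl | hne
      · simp [Function.update_self]; omega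
      · simp [Function.update_of_ne hne]; exact hg1 x
    · rw [Finset.sum_update_of_mem hx₀s]
      rw [← Finset.sum_erase_add s g hx₀s] at hg2
      rw [Finset.sdiff_singleton_eq_erase]
      omega



variable {n : ℕ}



/-- For `f = a/d` with `1 ≤ a < d`, there are at least `a+1` values `k ∈ [1,d]`
with `fract (k*f) ≤ f` (i.e. the interval `[(k-1)f, kf]` contains an integer). -/
lemma count_good (d a : ℕ) (ha : 1 ≤ a) (had : a + 1 ≤ d) (f : ℝ) (hf : (a : ℝ) = d * f)
    [DecidablePred fun k : ℕ => Int.fract ((k : ℝ) * f) ≤ f] :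
    a + 1 ≤ ((Finset.Icc 1 d).filter (fun k : ℕ => Int.fract ((k : ℝ) * f) ≤ f)).card := by
  have hd0 : 0 < d := by omega
  have hdR : (0 : ℝ) < (d : ℝ) := by exact_mod_cast hd0
  have hfval : f = (a : ℝ) / d := by field_simp [hf]; linarith [mul_comm f (d:ℝ)]
  have hf0 : 0 ≤ f := by
    rw [hfval]; positivity
  have hf1 : f < 1 := by
    rw [hfval, div_lt_one hdR]; exact_mod_cast (by omega : a < d)
  -- the injection
  set ψ : ℕ → ℕ := fun j => if j = 0 then 1 else (j * d + a - 1) / a with hψ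
  -- bounds on a * ψ j for j ≥ 1
  have hbounds : ∀ j, 1 ≤ j → j * d ≤ a * ψ j ∧ a * ψ j ≤ j * d + a - 1 := by
    intro j hj
    have hjne : j ≠ 0 := by omega
    have hj1 : ψ j = (j * d + a - 1) / a := by simp [hψ, hjne]
    set m := j * d + a - 1 with hm
    have hdm := Nat.div_add_mod m a
    have hmod := Nat.mod_lt m (show 0 < a by omega)
    rw [hj1]
    set q := m / a with hq
    set r := m % a with hr
    set P := a * q with hP
    constructor
    · -- j*d ≤ a*q :  m = a*q + r, r ≤ a-1, m = j*d + a - 1 ⟹ a*q = m - r ≥ j*d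
      have hjd : 1 ≤ j * d := by
        calc 1 ≤ 1 * 1 := by norm_num
        _ ≤ j * d := Nat.mul_le_mul hj (by omega)
      omega
    · omega
  have hmem : ∀ j ∈ Finset.range (a + 1), ψ j ∈ Finset.Icc 1 d := by
    intro j hj
    rw [Finset.mem_range] at hj
    rcases Nat.eq_zero_or_pos j with rfl | hjpos
    · simp [hψ]; omega
    · obtain ⟨h1, h2⟩ := hbounds j hjpos
      rw [Finset.mem_Icc]
      constructor
      · -- 1 ≤ ψ j
        by_contra hcon
        push_neg at hcon
        interval_cases h : ψ j
        · simp [h] at h1 h2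
          have : 1 * d ≤ j * d := Nat.mul_le_mul_right d hjpos
          omega
      · -- ψ j ≤ d
        have h3 : a * ψ j ≤ a * d + a - 1 := by
          have : j * d ≤ a * d := Nat.mul_le_mul_right d (by omega)
          omega
        by_contra hcon
        push_neg at hcon
        have : a * (d + 1) ≤ a * ψ j := Nat.mul_le_mul_left a hcon
        have : a * (d+1) = a * d + a := by ring
        omega
  have hmono : ∀ j j', j < j' → j' ≤ a → ψ j < ψ j' := by
    intro j j' hlt hle
    obtain ⟨h1', h2'⟩ := hbounds j' (by omega)
    rcases Nat.eq_zero_or_pos j with rfl | hjpos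
    · -- ψ 0 = 1 < ψ j'
      have : 1 * d ≤ j' * d := Nat.mul_le_mul_right d (by omega)
      have hgt : a * 1 < a * ψ j' := by omega
      have h2 := Nat.lt_of_mul_lt_mul_left hgt
      have hψ0 : ψ 0 = 1 := by simp [hψ]
      omega
    · obtain ⟨h1, h2⟩ := hbounds j hjpos
      have hd' : (j + 1) * d = j * d + d := by ring
      have hle2 : (j+1) * d ≤ j' * d := Nat.mul_le_mul_right d (by omega)
      have hgt : a * ψ j < a * ψ j' := by omega
      exact Nat.lt_of_mul_lt_mul_left hgt
  have hgood : ∀ j ∈ Finset.range (a + 1),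
      ψ j ∈ (Finset.Icc 1 d).filter (fun k : ℕ => Int.fract ((k : ℝ) * f) ≤ f) := by
    intro j hj
    rw [Finset.mem_filter]
    refine ⟨hmem j hj, ?_⟩
    rcases Nat.eq_zero_or_pos j with rfl | hjpos
    · have : ψ 0 = 1 := by simp [hψ]
      rw [this]
      push_cast
      rw [one_mul, Int.fract_eq_self.mpr ⟨hf0, hf1⟩]
    · obtain ⟨h1, h2⟩ := hbounds j hjpos
      set q := ψ j with hqdef
      -- real versions
      have hR1 : (j : ℝ) * d ≤ (a : ℝ) * q := by exact_mod_cast h1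
      have hR2 : (a : ℝ) * q ≤ (j : ℝ) * d + a - 1 := by
        have : (a * q : ℕ) ≤ j * d + a - 1 := h2
        have hcast : ((j * d + a - 1 : ℕ) : ℝ) = (j:ℝ)*d + a - 1 := by
          push_cast [Nat.cast_sub (show 1 ≤ j * d + a by omega)]
          ring
        calc ((a : ℝ) * q) = ((a * q : ℕ) : ℝ) := by push_cast; ring
          _ ≤ ((j * d + a - 1 : ℕ) : ℝ) := by exact_mod_cast h2
          _ = (j:ℝ)*d + a - 1 := hcast
      rw [hf] at hR1 hR2
      -- j ≤ q * f
      have hjqf : (j : ℝ) ≤ (q : ℝ) * f := by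
        have h := hR1
        have : (j : ℝ) * d ≤ ((q : ℝ) * f) * d := by nlinarith
        exact le_of_mul_le_mul_right this hdR
      -- q * f - f ≤ j
      have hqfj : (q : ℝ) * f - f ≤ (j : ℝ) := by
        have : ((q:ℝ) * f - f) * d ≤ (j : ℝ) * d := by nlinarith
        exact le_of_mul_le_mul_right this hdR
      have hfloor : (j : ℤ) ≤ ⌊(q : ℝ) * f⌋ := by
        rw [Int.le_floor]; exact_mod_cast hjqf
      have : Int.fract ((q:ℝ) * f) = (q:ℝ) * f - ⌊(q : ℝ) * f⌋ := rfl
      rw [this]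
      have : ((j:ℝ)) ≤ ((⌊(q : ℝ) * f⌋ : ℤ) : ℝ) := by exact_mod_cast hfloor
      linarith
  have hinj : Set.InjOn ψ ↑(Finset.range (a + 1)) := by
    intro j hj j' hj' heq
    simp only [Finset.coe_range, Set.mem_Iio] at hj hj'
    by_contra hne
    rcases Nat.lt_or_ge j j' with h | h
    · exact absurd heq (Nat.ne_of_lt (hmono j j' h (by omega)))
    · have : j' < j := by omega
      exact absurd heq.symm (Nat.ne_of_lt (hmono j' j this (by omega)))
  calc a + 1 = (Finset.range (a + 1)).card := by rw [Finset.card_range]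
    _ ≤ _ := Finset.card_le_card_of_injOn ψ hgood hinj


lemma exists_denom (T : Finset (Fin n → ℤ))
    (hind : AffineIndependent ℝ (fun p : T => coeR p.1))
    (f : (Fin n → ℤ) → ℝ)
    (hlat : ∀ k : ℕ, ∃ z : Fin n → ℤ, (∑ x ∈ T, Int.fract ((k:ℝ) * f x) • coeR x) = coeR z)
    (hsumint : ∀ k : ℕ, ∃ j : ℤ, (∑ x ∈ T, Int.fract ((k:ℝ) * f x)) = (j:ℝ)) :
    ∃ d : ℕ, 0 < d ∧ ∀ x ∈ T, ∃ j : ℤ, (d:ℝ) * f x = (j:ℝ) := by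
  classical
  choose z hz using hlat
  choose jj hjj using hsumint
  set C : Fin n → ℤ := fun i => ∑ x ∈ T, |x i| with hC
  have hzb : ∀ k i, z k i ∈ Finset.Icc (-(C i)) (C i) := by
    intro k i
    have h1 : ((z k i : ℤ) : ℝ) = ∑ x ∈ T, Int.fract ((k:ℝ) * f x) * (x i : ℝ) := by
      have := congrFun (hz k).symm i
      simpa [coeR, Finset.sum_apply] using this
    have h2 : |((z k i : ℤ) : ℝ)| ≤ (C i : ℝ) := by
      rw [h1]
      calc |∑ x ∈ T, Int.fract ((k:ℝ) * f x) * (x i : ℝ)|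
          ≤ ∑ x ∈ T, |Int.fract ((k:ℝ) * f x) * (x i : ℝ)| := Finset.abs_sum_le_sum_abs _ _
        _ ≤ ∑ x ∈ T, |(x i : ℝ)| := by
            refine Finset.sum_le_sum fun x hx => ?_
            rw [abs_mul]
            have h3 : |Int.fract ((k:ℝ) * f x)| ≤ 1 := by
              rw [abs_of_nonneg (Int.fract_nonneg _)]
              exact le_of_lt (Int.fract_lt_one _)
            nlinarith [abs_nonneg ((x i : ℝ))]
        _ = (C i : ℝ) := by rw [hC]; push_cast; rfl
    have : |z k i| ≤ C i := by exact_mod_cast h2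
    rw [Finset.mem_Icc]
    exact abs_le.mp this
  have hjb : ∀ k, jj k ∈ Finset.Icc (0:ℤ) (T.card : ℤ) := by
    intro k
    rw [Finset.mem_Icc]
    constructor
    · have : (0:ℝ) ≤ (jj k : ℝ) := by
        rw [← hjj k]
        exact Finset.sum_nonneg fun x _ => Int.fract_nonneg _
      exact_mod_cast this
    · have : ((jj k : ℤ) : ℝ) ≤ (T.card : ℝ) := by
        rw [← hjj k]
        calc ∑ x ∈ T, Int.fract ((k:ℝ) * f x) ≤ ∑ x ∈ T, (1:ℝ) :=
          Finset.sum_le_sum fun x _ => le_of_lt (Int.fract_lt_one _)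
        _ = (T.card : ℝ) := by simp
      exact_mod_cast this
  set S := (Fintype.piFinset fun i => Finset.Icc (-(C i)) (C i)) ×ˢ Finset.Icc (0:ℤ) (T.card : ℤ)
    with hS
  have hmaps : ∀ k ∈ Finset.range (S.card + 1), (z k, jj k) ∈ S := by
    intro k _
    rw [hS, Finset.mem_product]
    exact ⟨by rw [Fintype.mem_piFinset]; exact fun i => hzb k i, hjb k⟩
  obtain ⟨k₁, hk₁, k₂, hk₂, hne, heq⟩ :=
    Finset.exists_ne_map_eq_of_card_lt_of_maps_to (by simp) hmaps
  -- wlog k₁ < k₂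
  obtain ⟨a, b, hab, hza, hja⟩ : ∃ a b : ℕ, a < b ∧ z a = z b ∧ jj a = jj b := by
    rcases lt_or_gt_of_ne hne with h | h
    · exact ⟨k₁, k₂, h, congrArg Prod.fst heq, congrArg Prod.snd heq⟩
    · exact ⟨k₂, k₁, h, (congrArg Prod.fst heq).symm, (congrArg Prod.snd heq).symm⟩
  have hfr : ∀ x ∈ T, Int.fract ((b:ℝ) * f x) = Int.fract ((a:ℝ) * f x) := by
    have h0 : ∑ x ∈ T, (Int.fract ((b:ℝ) * f x) - Int.fract ((a:ℝ) * f x)) = 0 := by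
      rw [Finset.sum_sub_distrib, hjj a, hjj b, hja]
      ring
    have h1 : ∑ x ∈ T, (Int.fract ((b:ℝ) * f x) - Int.fract ((a:ℝ) * f x)) • coeR x = 0 := by
      have : ∀ x ∈ T, (Int.fract ((b:ℝ) * f x) - Int.fract ((a:ℝ) * f x)) • coeR x
          = Int.fract ((b:ℝ) * f x) • coeR x - Int.fract ((a:ℝ) * f x) • coeR x := by
        intro x _; rw [sub_smul]
      rw [Finset.sum_congr rfl this, Finset.sum_sub_distrib, hz a, hz b, hza]
      ring
    intro x hx
    have := unique_weights hind h0 h1 x hx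
    linarith
  refine ⟨b - a, by omega, fun x hx => ?_⟩
  obtain ⟨j, hj⟩ := Int.fract_eq_fract.mp (hfr x hx)
  refine ⟨j, ?_⟩
  have hcast : ((b - a : ℕ) : ℝ) = (b : ℝ) - (a : ℝ) := by
    push_cast [Nat.cast_sub (le_of_lt hab)]; ring
  rw [hcast, sub_mul]
  linarith [hj]

lemma split (hn : 2 ≤ n) (V : Finset (Fin n → ℤ)) (m : ℕ) (hm : 2 ≤ m) (v : Fin n → ℤ)
    (h : GoodRep V ((m * (n - 1) : ℕ) : ℝ) v) :
    ∃ v₁ v₂ : Fin n → ℤ, v = v₁ + v₂ ∧ GoodRep V (((n - 1 : ℕ) : ℝ)) v₁ ∧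
      GoodRep V (((m - 1) * (n - 1) : ℕ) : ℝ) v₂ := by
  classical
  obtain ⟨T, hTV, hind, μ, hμ0, hμsum, hμv⟩ := h
  set c := n - 1 with hc
  have hc1 : 1 ≤ c := by omega
  have hcn : c = n - 1 := rfl
  set f : (Fin n → ℤ) → ℝ := fun x => Int.fract (μ x) with hf
  set Fl : (Fin n → ℤ) → ℤ := fun x => ⌊μ x⌋ with hFl
  have hFl0 : ∀ x ∈ T, 0 ≤ Fl x := fun x hx => Int.floor_nonneg.mpr (hμ0 x hx)
  have hfd : ∀ x, f x = μ x - (Fl x : ℝ) := fun x => (Int.self_sub_floor (μ x)).symm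
  have hf0 : ∀ x, 0 ≤ f x := fun x => Int.fract_nonneg _
  have hf1 : ∀ x, f x < 1 := fun x => Int.fract_lt_one _
  set SZ : ℤ := (m * c : ℕ) - ∑ x ∈ T, Fl x with hSZ
  have hSZreal : (SZ : ℝ) = ∑ x ∈ T, f x := by
    have h1 : ∑ x ∈ T, f x = ∑ x ∈ T, (μ x - (Fl x : ℝ)) :=
      Finset.sum_congr rfl fun x _ => hfd x
    rw [h1, Finset.sum_sub_distrib, hμsum, hSZ]
    push_cast
    ring
  have hSZ0 : (0:ℤ) ≤ SZ := by
    have : (0:ℝ) ≤ (SZ:ℝ) := by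
      rw [hSZreal]; exact Finset.sum_nonneg fun x _ => hf0 x
    exact_mod_cast this
  have hTcard : T.card ≤ n + 1 := card_le_of_ind hind
  have hTne : T.Nonempty := by
    rw [Finset.nonempty_iff_ne_empty]
    intro hcon
    rw [hcon] at hμsum
    simp at hμsum
    have : 0 < m * c := by positivity
    omega
  have hSZcard : (SZ:ℝ) < T.card := by
    rw [hSZreal]
    calc ∑ x ∈ T, f x < ∑ x ∈ T, (1:ℝ) :=
      Finset.sum_lt_sum_of_nonempty hTne fun x _ => hf1 x
    _ = T.card := by simp
  have hSZlen : SZ ≤ (n:ℤ) := by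
    have h1 : SZ < (T.card : ℤ) := by exact_mod_cast hSZcard
    have h2 : (T.card : ℤ) ≤ (n:ℤ) + 1 := by exact_mod_cast hTcard
    omega
  set FN : (Fin n → ℤ) → ℕ := fun x => (Fl x).toNat with hFN
  have hFNc : ∀ x ∈ T, ((FN x : ℤ)) = Fl x := fun x hx => Int.toNat_of_nonneg (hFl0 x hx)
  have hFNsum : ((∑ x ∈ T, FN x : ℕ) : ℤ) = (m * c : ℕ) - SZ := by
    rw [hSZ]
    push_cast
    rw [Finset.sum_congr rfl hFNc]
    ring
  -- common finishing step
  have finish : ∀ (q : (Fin n → ℤ) → ℝ) (z : Fin n → ℤ) (HZ : ℤ),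
      (∀ x ∈ T, 0 ≤ q x) → (∀ x ∈ T, q x ≤ f x) →
      ((∑ x ∈ T, q x • coeR x) = coeR z) → ((HZ:ℝ) = ∑ x ∈ T, q x) →
      0 ≤ HZ → HZ ≤ (c:ℤ) → ((c:ℤ) - HZ ≤ ((∑ x ∈ T, FN x : ℕ) : ℤ)) →
      ∃ v₁ v₂ : Fin n → ℤ, v = v₁ + v₂ ∧ GoodRep V ((c : ℕ) : ℝ) v₁ ∧
        GoodRep V (((m - 1) * c : ℕ) : ℝ) v₂ := by
    intro q z HZ hq0 hqf hqz hHZr hHZ0 hHZc hcap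
    obtain ⟨t, ht1, ht2⟩ := pick_nat T FN ((c:ℤ) - HZ).toNat (by omega)
    set β : (Fin n → ℤ) → ℝ := fun x => q x + t x with hβ
    set v₁ : Fin n → ℤ := z + ∑ x ∈ T, (t x : ℤ) • x with hv₁
    have hβv₁ : ∑ x ∈ T, β x • coeR x = coeR v₁ := by
      rw [hv₁, coeR_add, coeR_intsum, ← hqz]
      rw [← Finset.sum_add_distrib]
      refine Finset.sum_congr rfl fun x _ => ?_
      rw [hβ]
      push_cast
      rw [add_smul]
    have htsum : ((∑ x ∈ T, t x : ℕ) : ℝ) = ((c:ℤ) : ℝ) - (HZ : ℝ) := by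
      have h0 : (0:ℤ) ≤ (c:ℤ) - HZ := by omega
      have hval : ((((c:ℤ) - HZ).toNat : ℕ) : ℤ) = (c:ℤ) - HZ := Int.toNat_of_nonneg h0
      rw [ht2]
      exact_mod_cast hval
    have hβsum : ∑ x ∈ T, β x = ((c : ℕ) : ℝ) := by
      simp only [hβ]
      rw [Finset.sum_add_distrib, ← hHZr]
      have : ∑ x ∈ T, ((t x : ℝ)) = ((∑ x ∈ T, t x : ℕ) : ℝ) := by push_cast; rfl
      rw [this, htsum]
      push_cast
      ring
    have hβ0 : ∀ x ∈ T, 0 ≤ β x := by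
      intro x hx
      have h1 := hq0 x hx
      have h2 : (0:ℝ) ≤ (t x : ℝ) := by positivity
      simp only [hβ]
      linarith
    have hβμ : ∀ x ∈ T, β x ≤ μ x := by
      intro x hx
      have h1 : (t x : ℝ) ≤ (FN x : ℝ) := by exact_mod_cast ht1 x
      have h2 : (FN x : ℝ) = ((Fl x : ℤ) : ℝ) := by exact_mod_cast hFNc x hx
      have h3 : q x ≤ f x := hqf x hx
      have := hfd x
      simp only [hβ]
      linarith
    refine ⟨v₁, v - v₁, by abel, ⟨T, hTV, hind, β, hβ0, hβsum, hβv₁⟩,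
      ⟨T, hTV, hind, fun x => μ x - β x, fun x hx => sub_nonneg.mpr (hβμ x hx), ?_, ?_⟩⟩
    · rw [Finset.sum_sub_distrib, hμsum, hβsum]
      have hmc : (m - 1) * c + c = m * c := by
        cases m with
        | zero => omega
        | succ m' => simp [Nat.succ_sub_one]; ring
      have : ((m * c : ℕ) : ℝ) = (((m-1) * c : ℕ) : ℝ) + ((c:ℕ) : ℝ) := by
        rw [← hmc]; push_cast; ring
      rw [this]; ring
    · have : ∀ x ∈ T, (μ x - β x) • coeR x = μ x • coeR x - β x • coeR x :=
        fun x _ => sub_smul _ _ _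
      rw [Finset.sum_congr rfl this, Finset.sum_sub_distrib, hμv, hβv₁, coeR_sub]
  -- case split on SZ
  rcases le_or_gt SZ (c:ℤ) with hcase | hcase
  · -- easy case
    refine finish f (v - ∑ x ∈ T, Fl x • x) SZ (fun x _ => hf0 x) (fun x _ => le_refl _) ?_
      hSZreal hSZ0 hcase ?_
    · rw [coeR_sub, coeR_intsum, ← hμv]
      have : ∀ x ∈ T, f x • coeR x = μ x • coeR x - (Fl x : ℝ) • coeR x := by
        intro x _
        rw [hfd x, sub_smul]
      rw [Finset.sum_congr rfl this, Finset.sum_sub_distrib]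
    · have hmcZ : ((c:ℕ) : ℤ) ≤ ((m * c : ℕ) : ℤ) := by
        have : c ≤ m * c := Nat.le_mul_of_pos_left c (by omega)
        exact_mod_cast this
      omega
  · -- hard case : SZ = n
    have hSZn : SZ = (n:ℤ) := by omega
    have hsumf : ∑ x ∈ T, f x = (n:ℝ) := by
      rw [← hSZreal, hSZn]; push_cast; rfl
    have hcardn : T.card = n + 1 := by
      by_contra hcon
      have h1 : T.card ≤ n := by omega
      have : (SZ:ℝ) < (n:ℝ) := by
        calc (SZ:ℝ) < T.card := hSZcard
        _ ≤ (n:ℝ) := by exact_mod_cast h1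
      rw [hSZn] at this
      exact lt_irrefl _ this
    have hfpos : ∀ x ∈ T, 0 < f x := by
      intro x₀ hx₀
      rcases lt_or_eq_of_le (hf0 x₀) with h | h
      · exact h
      have hne : (T.erase x₀).Nonempty := by
        rw [← Finset.card_pos, Finset.card_erase_of_mem hx₀]
        omega
      have hsum' : ∑ x ∈ T.erase x₀, f x = (n:ℝ) := by
        rw [← Finset.add_sum_erase T f hx₀] at hsumf
        rw [← h] at hsumf
        linarith
      have h2 : ∑ x ∈ T.erase x₀, f x < ((T.erase x₀).card : ℝ) := by
        calc ∑ x ∈ T.erase x₀, f x < ∑ x ∈ T.erase x₀, (1:ℝ) :=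
          Finset.sum_lt_sum_of_nonempty hne fun x _ => hf1 x
        _ = ((T.erase x₀).card : ℝ) := by simp
      rw [hsum', Finset.card_erase_of_mem hx₀, hcardn] at h2
      have h3 : ((n + 1 - 1 : ℕ) : ℝ) = (n : ℝ) := by norm_num
      rw [h3] at h2
      exact absurd h2 (lt_irrefl _)
    -- lattice points for all multiples
    have hlat : ∀ k : ℕ, ∃ zz : Fin n → ℤ,
        (∑ x ∈ T, Int.fract ((k:ℝ) * f x) • coeR x) = coeR zz := by
      intro k
      refine ⟨(k:ℤ) • v - ∑ x ∈ T, ((k:ℤ) * Fl x + ⌊(k:ℝ) * f x⌋) • x, ?_⟩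
      rw [coeR_sub, coeR_zsmul, coeR_intsum, ← hμv]
      rw [Finset.smul_sum, ← Finset.sum_sub_distrib]
      refine Finset.sum_congr rfl fun x _ => ?_
      have h1 : Int.fract ((k:ℝ) * f x) = (k:ℝ) * f x - (⌊(k:ℝ) * f x⌋ : ℝ) :=
        (Int.self_sub_floor _).symm
      have h2 : f x = μ x - (Fl x : ℝ) := hfd x
      rw [smul_smul, ← sub_smul]
      congr 1
      rw [h1, h2]
      push_cast
      ring
    have hsumint : ∀ k : ℕ, ∃ j : ℤ, (∑ x ∈ T, Int.fract ((k:ℝ) * f x)) = (j:ℝ) := by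
      intro k
      refine ⟨(k:ℤ) * n - ∑ x ∈ T, ⌊(k:ℝ) * f x⌋, ?_⟩
      have h1 : ∀ x ∈ T, Int.fract ((k:ℝ) * f x) = (k:ℝ) * f x - (⌊(k:ℝ) * f x⌋ : ℝ) :=
        fun x _ => (Int.self_sub_floor _).symm
      rw [Finset.sum_congr rfl h1, Finset.sum_sub_distrib, ← Finset.mul_sum, hsumf]
      push_cast
      ring
    obtain ⟨d₀, hd₀, hd₀p⟩ := exists_denom T hind f hlat hsumint
    have hQ : ∃ d : ℕ, 0 < d ∧ ∀ x ∈ T, ∃ j : ℤ, (d:ℝ) * f x = (j:ℝ) := ⟨d₀, hd₀, hd₀p⟩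
    set d := Nat.find hQ with hd
    obtain ⟨hdpos, hdint⟩ : 0 < d ∧ ∀ x ∈ T, ∃ j : ℤ, (d:ℝ) * f x = (j:ℝ) := Nat.find_spec hQ
    have hdvd : ∀ k : ℕ, 0 < k → (∀ x ∈ T, ∃ j : ℤ, (k:ℝ) * f x = (j:ℝ)) → d ∣ k := by
      intro k hk hkp
      rcases Nat.eq_zero_or_pos (k % d) with h0 | hpos
      · exact Nat.dvd_of_mod_eq_zero h0
      · exfalso
        have hlt : k % d < d := Nat.mod_lt k hdpos
        have := Nat.find_min hQ hlt
        apply this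
        refine ⟨hpos, fun x hx => ?_⟩
        obtain ⟨jk, hjk⟩ := hkp x hx
        obtain ⟨jd, hjd⟩ := hdint x hx
        set kd := k / d with hkd
        refine ⟨jk - (kd : ℤ) * jd, ?_⟩
        have hmodc : ((k % d : ℕ) : ℝ) = (k:ℝ) - (kd : ℝ) * (d:ℝ) := by
          have h5 : (d * kd + k % d : ℕ) = k := Nat.div_add_mod k d
          have h6 : (d:ℝ) * (kd : ℝ) + ((k % d : ℕ) : ℝ) = (k:ℝ) := by
            exact_mod_cast h5
          linarith
        have h7 : (kd:ℝ) * (d:ℝ) * f x = (kd:ℝ) * (jd:ℝ) := by rw [mul_assoc, hjd]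
        have hrhs : ((jk - (kd : ℤ) * jd : ℤ) : ℝ) = (jk:ℝ) - (kd : ℝ) * (jd:ℝ) := by
          push_cast
          ring
        rw [hmodc, sub_mul, hjk, hrhs]
        linarith
    have hd3 : 3 ≤ d := by
      by_contra hcon
      push_neg at hcon
      interval_cases d
      · -- d = 1
        have hzero : ∀ x ∈ T, f x = 0 := by
          intro x hx
          obtain ⟨j, hj⟩ := hdint x hx
          simp only [Nat.cast_one, one_mul] at hj
          have h1 : (0:ℝ) ≤ (j:ℝ) := by rw [← hj]; exact hf0 x
          have h2 : ((j:ℤ):ℝ) < 1 := by rw [← hj]; exact hf1 x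
          have : j = 0 := by
            have h1' : (0:ℤ) ≤ j := by exact_mod_cast h1
            have h2' : j < 1 := by exact_mod_cast h2
            omega
          rw [hj, this]
          simp
        have hzz : ∑ x ∈ T, f x = 0 := Finset.sum_eq_zero hzero
        rw [hsumf] at hzz
        have hne : (n:ℝ) ≠ 0 := Nat.cast_ne_zero.mpr (by omega)
        exact hne hzz
      · -- d = 2
        have hhalf : ∀ x ∈ T, f x ≤ 1/2 := by
          intro x hx
          obtain ⟨j, hj⟩ := hdint x hx
          have hc2 : ((2:ℕ):ℝ) = 2 := by norm_num
          rw [hc2] at hj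
          have h1 : (0:ℤ) ≤ j := by
            have : (0:ℝ) ≤ (j:ℝ) := by rw [← hj]; linarith [hf0 x]
            exact_mod_cast this
          have h2 : j < 2 := by
            have : (j:ℝ) < 2 := by rw [← hj]; linarith [hf1 x]
            exact_mod_cast this
          have hj1 : (j:ℝ) ≤ 1 := by exact_mod_cast (show j ≤ 1 by omega)
          rw [← hj] at hj1
          linarith
        have hsum2 : (n:ℝ) ≤ (T.card : ℝ) * (1/2) := by
          rw [← hsumf]
          calc ∑ x ∈ T, f x ≤ ∑ _x ∈ T, (1/2 : ℝ) := Finset.sum_le_sum hhalf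
          _ = (T.card : ℝ) * (1/2) := by simp [Finset.sum_const, mul_comm]
        rw [hcardn] at hsum2
        have hn2 : (2:ℝ) ≤ (n:ℝ) := by exact_mod_cast hn
        push_cast at hsum2
        linarith
    -- the numerators aN
    set aN : (Fin n → ℤ) → ℕ := fun x => (⌊(d:ℝ) * f x⌋).toNat with haN
    have haR : ∀ x ∈ T, (aN x : ℝ) = (d:ℝ) * f x := by
      intro x hx
      obtain ⟨j, hj⟩ := hdint x hx
      have hj0 : (0:ℤ) ≤ j := by
        have : (0:ℝ) ≤ (j:ℝ) := by
          rw [← hj]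
          have := hf0 x
          positivity
        exact_mod_cast this
      have hfl : ⌊(d:ℝ) * f x⌋ = j := by rw [hj, Int.floor_intCast]
      have hfl2 : (⌊(d:ℝ) * f x⌋) = j := by rw [hj, Int.floor_intCast]
      rw [haN]
      simp only [hfl2]
      rw [hj]
      exact_mod_cast Int.toNat_of_nonneg hj0
    have ha1 : ∀ x ∈ T, 1 ≤ aN x := by
      intro x hx
      have hpos : (0:ℝ) < (aN x : ℝ) := by
        rw [haR x hx]
        have := hfpos x hx
        have hdR : (0:ℝ) < (d:ℝ) := by exact_mod_cast hdpos
        positivity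
      have : (0:ℕ) < aN x := by exact_mod_cast hpos
      omega
    have had : ∀ x ∈ T, aN x + 1 ≤ d := by
      intro x hx
      have hlt : (aN x : ℝ) < (d : ℝ) := by
        rw [haR x hx]
        have hdR : (0:ℝ) < (d:ℝ) := by exact_mod_cast hdpos
        nlinarith [hf1 x]
      have : aN x < d := by exact_mod_cast hlt
      omega
    have hasum : ∑ x ∈ T, aN x = n * d := by
      have h1 : ((∑ x ∈ T, aN x : ℕ) : ℝ) = ((n * d : ℕ) : ℝ) := by
        push_cast
        rw [Finset.sum_congr rfl haR, ← Finset.mul_sum, hsumf]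
        ring
      exact_mod_cast h1
    -- counting good k's
    have hGood : ∀ x ∈ T, aN x + 1 ≤
        ((Finset.Icc 1 d).filter (fun k : ℕ => Int.fract ((k:ℝ) * f x) ≤ f x)).card :=
      fun x hx => count_good d (aN x) (ha1 x hx) (had x hx) (f x) (haR x hx)
    set AllGood := (Finset.Icc 1 d).filter
      (fun k : ℕ => ∀ x ∈ T, Int.fract ((k:ℝ) * f x) ≤ f x) with hAllGood
    have hAGcard : n + 1 ≤ AllGood.card := by
      have hsub : Finset.Icc 1 d \ AllGood ⊆ T.biUnion (fun x =>
          (Finset.Icc 1 d).filter (fun k : ℕ => ¬ Int.fract ((k:ℝ) * f x) ≤ f x)) := by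
        intro k hk
        rw [Finset.mem_sdiff, hAllGood, Finset.mem_filter] at hk
        obtain ⟨hk1, hk2⟩ := hk
        push_neg at hk2
        obtain ⟨x, hx, hxk⟩ := hk2 hk1
        rw [Finset.mem_biUnion]
        exact ⟨x, hx, Finset.mem_filter.mpr ⟨hk1, not_le.mpr hxk⟩⟩
      have hbound : (Finset.Icc 1 d \ AllGood).card ≤
          ∑ x ∈ T, ((Finset.Icc 1 d).filter (fun k : ℕ => ¬ Int.fract ((k:ℝ) * f x) ≤ f x)).card :=
        (Finset.card_le_card hsub).trans Finset.card_biUnion_le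
      have hIcc : (Finset.Icc 1 d).card = d := by
        rw [Nat.card_Icc]
        omega
      have hcompl : ∀ x ∈ T,
          ((Finset.Icc 1 d).filter (fun k : ℕ => Int.fract ((k:ℝ) * f x) ≤ f x)).card +
          ((Finset.Icc 1 d).filter (fun k : ℕ => ¬ Int.fract ((k:ℝ) * f x) ≤ f x)).card = d := by
        intro x hx
        rw [Finset.card_filter_add_card_filter_not, hIcc]
      -- sum over T
      have hsum1 : ∑ x ∈ T, (((Finset.Icc 1 d).filter
            (fun k : ℕ => Int.fract ((k:ℝ) * f x) ≤ f x)).card +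
          ((Finset.Icc 1 d).filter (fun k : ℕ => ¬ Int.fract ((k:ℝ) * f x) ≤ f x)).card)
          = (n+1) * d := by
        rw [Finset.sum_congr rfl hcompl]
        rw [Finset.sum_const, hcardn]
        ring
      rw [Finset.sum_add_distrib] at hsum1
      have hsum2 : n * d + (n+1) ≤ ∑ x ∈ T, ((Finset.Icc 1 d).filter
          (fun k : ℕ => Int.fract ((k:ℝ) * f x) ≤ f x)).card := by
        calc n * d + (n+1) = ∑ x ∈ T, (aN x + 1) := by
              rw [Finset.sum_add_distrib, hasum, Finset.sum_const, hcardn]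
              simp
        _ ≤ _ := Finset.sum_le_sum fun x hx => hGood x hx
      have hsd : (Finset.Icc 1 d \ AllGood).card = d - AllGood.card := by
        rw [Finset.card_sdiff_of_subset (Finset.filter_subset _ _), hIcc]
      have hAGle : AllGood.card ≤ d := by
        rw [← hIcc]
        exact Finset.card_le_card (Finset.filter_subset _ _)
      have hnd : (n+1) * d = n * d + d := by ring
      omega
    -- pick k ∈ AllGood, k ∉ {1, d}
    obtain ⟨k, hkAG, hk1, hkd⟩ : ∃ k ∈ AllGood, k ≠ 1 ∧ k ≠ d := by
      by_contra hcon
      push_neg at hcon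
      have hsub2 : AllGood ⊆ ({1, d} : Finset ℕ) := by
        intro k hk
        simp only [Finset.mem_insert, Finset.mem_singleton]
        rcases eq_or_ne k 1 with h | h
        · exact Or.inl h
        · exact Or.inr (hcon k hk h)
      have hcc := Finset.card_le_card hsub2
      have h2 : ({1, d} : Finset ℕ).card ≤ 2 := by
        apply le_trans (Finset.card_insert_le _ _)
        simp
      omega
    rw [hAllGood, Finset.mem_filter, Finset.mem_Icc] at hkAG
    obtain ⟨⟨hkge, hkle⟩, hkgood⟩ := hkAG
    have hk2 : 2 ≤ k := by omega
    have hkd1 : k ≤ d - 1 := by omega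
    -- assemble
    set q : (Fin n → ℤ) → ℝ := fun x => Int.fract ((k:ℝ) * f x) with hq
    obtain ⟨zz, hzz⟩ := hlat k
    set HZ : ℤ := (k:ℤ) * n - ∑ x ∈ T, ⌊(k:ℝ) * f x⌋ with hHZ
    have hHZr : (HZ:ℝ) = ∑ x ∈ T, q x := by
      obtain ⟨j, hj⟩ := hsumint k
      have hjval : j = HZ := by
        have h1 : ∀ x ∈ T, Int.fract ((k:ℝ) * f x) = (k:ℝ) * f x - (⌊(k:ℝ) * f x⌋ : ℝ) :=
          fun x _ => (Int.self_sub_floor _).symm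
        have h2 : (j:ℝ) = (k:ℝ) * n - ((∑ x ∈ T, ⌊(k:ℝ) * f x⌋ : ℤ) : ℝ) := by
          rw [← hj, Finset.sum_congr rfl h1, Finset.sum_sub_distrib, ← Finset.mul_sum, hsumf]
          push_cast
          ring
        have h3 : ((HZ:ℤ):ℝ) = (k:ℝ) * n - ((∑ x ∈ T, ⌊(k:ℝ) * f x⌋ : ℤ) : ℝ) := by
          rw [hHZ]
          push_cast
          ring
        have : (j:ℝ) = ((HZ:ℤ):ℝ) := by rw [h2, ← h3]
        exact_mod_cast this
      rw [← hjval, hj]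
    have hq0 : ∀ x ∈ T, 0 ≤ q x := fun x _ => Int.fract_nonneg _
    have hqf : ∀ x ∈ T, q x ≤ f x := fun x hx => hkgood x hx
    have hHZ0 : 0 ≤ HZ := by
      have : (0:ℝ) ≤ (HZ:ℝ) := by
        rw [hHZr]
        exact Finset.sum_nonneg fun x hx => hq0 x hx
      exact_mod_cast this
    have hHZ1 : 1 ≤ HZ := by
      rcases lt_or_ge HZ 1 with hlt | hge
      · exfalso
        have hHZz : HZ = 0 := by omega
        have hqz : ∀ x ∈ T, q x = 0 := by
          have h0 : ∑ x ∈ T, q x = 0 := by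
            rw [← hHZr, hHZz]
            simp
          exact (Finset.sum_eq_zero_iff_of_nonneg hq0).mp h0
        have hint : ∀ x ∈ T, ∃ j : ℤ, (k:ℝ) * f x = (j:ℝ) := by
          intro x hx
          refine ⟨⌊(k:ℝ) * f x⌋, ?_⟩
          have := hqz x hx
          rw [hq] at this
          simp only at this
          have h2 : Int.fract ((k:ℝ) * f x) = 0 := this
          have := Int.self_sub_floor ((k:ℝ) * f x)
          rw [h2] at this
          linarith
        have := hdvd k (by omega) hint
        have := Nat.le_of_dvd (by omega) this
        omega
      · exact hge
    have hHZc : HZ ≤ (c:ℤ) := by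
      have hHZn : HZ ≤ (n:ℤ) := by
        have : (HZ:ℝ) ≤ (n:ℝ) := by
          rw [hHZr, ← hsumf]
          exact Finset.sum_le_sum hqf
        exact_mod_cast this
      rcases lt_or_ge HZ (n:ℤ) with hlt | hge
      · have hcZ : ((c:ℕ):ℤ) = (n:ℤ) - 1 := by
          rw [hcn]
          push_cast [Nat.cast_sub (show 1 ≤ n by omega)]
          ring
        omega
      · exfalso
        have hHZn' : HZ = (n:ℤ) := le_antisymm hHZn hge
        have heq : ∀ x ∈ T, f x - q x = 0 := by
          have h0 : ∑ x ∈ T, (f x - q x) = 0 := by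
            rw [Finset.sum_sub_distrib, hsumf, ← hHZr, hHZn']
            simp
          exact (Finset.sum_eq_zero_iff_of_nonneg
            (fun x hx => by linarith [hqf x hx])).mp h0
        have hint : ∀ x ∈ T, ∃ j : ℤ, ((k - 1 : ℕ):ℝ) * f x = (j:ℝ) := by
          intro x hx
          have h1 : q x = f x := by linarith [heq x hx]
          have h2 : Int.fract ((k:ℝ) * f x) = Int.fract (f x) := by
            have hfx : Int.fract (f x) = f x := Int.fract_eq_self.mpr ⟨hf0 x, hf1 x⟩
            calc Int.fract ((k:ℝ) * f x) = q x := rfl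
              _ = f x := h1
              _ = Int.fract (f x) := hfx.symm
          obtain ⟨j, hj⟩ := Int.fract_eq_fract.mp h2
          refine ⟨j, ?_⟩
          have hkc : ((k - 1 : ℕ):ℝ) = (k:ℝ) - 1 := by
            push_cast [Nat.cast_sub (show 1 ≤ k by omega)]
            ring
          rw [hkc, sub_mul, one_mul, hj]
        have := hdvd (k-1) (by omega) hint
        have := Nat.le_of_dvd (by omega) this
        omega
    have hcap : (c:ℤ) - HZ ≤ ((∑ x ∈ T, FN x : ℕ) : ℤ) := by
      have hmc : 2 * c ≤ m * c := Nat.mul_le_mul_right c hm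
      have hmcZ : ((2 * c : ℕ):ℤ) ≤ ((m * c : ℕ):ℤ) := by exact_mod_cast hmc
      have hcZ : ((c:ℕ):ℤ) = (n:ℤ) - 1 := by
        rw [hcn]
        push_cast [Nat.cast_sub (show 1 ≤ n by omega)]
        ring
      have h2c : ((2 * c : ℕ):ℤ) = 2 * ((c:ℕ):ℤ) := by push_cast; ring
      omega
    exact finish q zz HZ hq0 hqf hzz hHZr hHZ0 hHZc hcap


lemma main_induction (hn : 2 ≤ n) (V : Finset (Fin n → ℤ)) :
    ∀ m : ℕ, 1 ≤ m → ∀ v : Fin n → ℤ, GoodRep V ((m * (n - 1) : ℕ) : ℝ) v →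
      ∃ w : Fin m → (Fin n → ℤ), (∀ j, GoodRep V (((n - 1 : ℕ)) : ℝ) (w j)) ∧ ∑ j, w j = v := by
  refine Nat.le_induction ?_ ?_
  · intro v hv
    rw [one_mul] at hv
    exact ⟨fun _ => v, fun _ => hv, by simp⟩
  · intro m hm ih v hv
    obtain ⟨v₁, v₂, heq, h1, h2⟩ := split hn V (m+1) (by omega) v hv
    have h2' : GoodRep V ((m * (n - 1) : ℕ) : ℝ) v₂ := by
      have : (m + 1 - 1) * (n - 1) = m * (n - 1) := by simp
      rwa [this] at h2
    obtain ⟨w', hw'1, hw'2⟩ := ih v₂ h2'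
    refine ⟨Fin.cons v₁ w', ?_, ?_⟩
    · intro j
      refine Fin.cases ?_ ?_ j
      · exact h1
      · intro i
        simpa using hw'1 i
    · rw [Fin.sum_cons, hw'2, heq]
lemma goodRep_mem (V : Finset (Fin n → ℤ)) (A : Set (Fin n → ℝ))
    (hA : A = convexHull ℝ (coeR '' (V : Set (Fin n → ℤ)))) (c : ℕ) (hc : 0 < c)
    {x : Fin n → ℤ} (h : GoodRep V ((c : ℕ) : ℝ) x) : coeR x ∈ ((c : ℕ) : ℝ) • A := by
  obtain ⟨T, hTV, hind, μ, hμ0, hμsum, hμv⟩ := h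
  have hcR : (0:ℝ) < ((c:ℕ):ℝ) := by exact_mod_cast hc
  have hmem : T.centerMass μ coeR ∈ convexHull ℝ (coeR '' (V : Set (Fin n → ℤ))) := by
    apply Finset.centerMass_mem_convexHull T hμ0 (by rw [hμsum]; exact hcR)
    intro i hi
    exact ⟨i, hTV hi, rfl⟩
  have hcm : T.centerMass μ coeR = (((c:ℕ):ℝ))⁻¹ • coeR x := by
    rw [Finset.centerMass, hμsum, hμv]
  rw [hA]
  refine ⟨((c:ℕ):ℝ)⁻¹ • coeR x, by rw [← hcm]; exact hmem, ?_⟩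
  show ((c:ℕ):ℝ) • (((c:ℕ):ℝ))⁻¹ • coeR x = coeR x
  rw [smul_smul, mul_inv_cancel₀ (ne_of_gt hcR), one_smul]
end S7

/-- A lattice polytope `P ⊆ ℝⁿ` is normal if for every integer `k ≥ 1`, every
lattice point of `k·P` is a sum of `k` lattice points of `P`. -/
def IsNormal {n : ℕ} (P : Set (Fin n → ℝ)) : Prop :=
  ∀ k : ℕ, 1 ≤ k → ∀ v : Fin n → ℤ, coeR v ∈ (k : ℝ) • P →
    ∃ w : Fin k → (Fin n → ℤ), (∀ j, coeR (w j) ∈ P) ∧ ∑ j, w j = v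

/-- Let `A ⊆ ℝⁿ` be a lattice polytope (the convex hull of a finite
set of lattice points) of dimension `n`, with `n ≥ 1`. Then the dilate `(n−1)·A`
is normal. -/
theorem statement7 (n : ℕ) (hn : 1 ≤ n) (V : Finset (Fin n → ℤ))
    (A : Set (Fin n → ℝ)) (hA : A = convexHull ℝ (coeR '' (V : Set (Fin n → ℤ))))
    (hfull : affineSpan ℝ A = ⊤) :
    IsNormal ((((n - 1 : ℕ) : ℝ)) • A) := by
  classical
  intro k hk v hv
  rcases Nat.lt_or_ge n 2 with hn2 | hn2
  · -- n = 1 : the dilate is {0}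
    have hn1 : n = 1 := by omega
    subst hn1
    have hAne : A.Nonempty := by
      have h1 : ((affineSpan ℝ A : AffineSubspace ℝ (Fin 1 → ℝ)) : Set (Fin 1 → ℝ)).Nonempty := by
        rw [hfull]
        exact ⟨0, AffineSubspace.mem_top ℝ (Fin 1 → ℝ) 0⟩
      exact (affineSpan_nonempty (k := ℝ)).mp h1
    have h0 : (((1:ℕ) - 1 : ℕ) : ℝ) = 0 := by norm_num
    rw [h0] at hv ⊢
    rw [Set.zero_smul_set hAne] at hv ⊢
    have hv0 : coeR v = 0 := by
      obtain ⟨y, hy, hvy⟩ := hv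
      simp only [Set.mem_zero] at hy
      subst hy
      simpa using hvy.symm
    have hveq : v = 0 := by
      apply S7.coeR_injective
      rw [hv0, S7.coeR_zero]
    refine ⟨fun _ => 0, fun j => by rw [S7.coeR_zero]; exact Set.zero_mem_zero, ?_⟩
    rw [hveq]
    simp
  · -- n ≥ 2
    set c : ℕ := n - 1 with hc
    have hc1 : 0 < c := by omega
    -- unpack the membership
    obtain ⟨y, hy, hvy⟩ := hv
    obtain ⟨a, ha, hya⟩ := hy
    have hvrep : coeR v = ((k * c : ℕ) : ℝ) • a := by
      have h1 : (k:ℝ) • y = coeR v := hvy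
      have h2 : ((c:ℕ):ℝ) • a = y := hya
      rw [← h1, ← h2, smul_smul]
      congr 1
      push_cast
      ring
    -- Caratheodory
    rw [hA, convexHull_eq_union] at ha
    simp only [Set.mem_iUnion] at ha
    obtain ⟨T', hT'sub, hT'ind, haT'⟩ := ha
    have hT'sub' : T' ⊆ V.image coeR := by
      intro y hyT
      have := hT'sub hyT
      rw [← Finset.coe_image] at this
      exact this
    obtain ⟨T, hTV, hTim⟩ := Finset.subset_image_iff.mp hT'sub'
    have hind : AffineIndependent ℝ (fun p : T => coeR p.1) := by
      have hmemT' : ∀ p : T, coeR p.1 ∈ T' := fun p => by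
        rw [← hTim]; exact Finset.mem_image_of_mem coeR p.2
      have hinj' : Function.Injective (fun p : T => (⟨coeR p.1, hmemT' p⟩ : T')) := by
        intro p q hpq
        apply Subtype.ext
        apply S7.coeR_injective
        exact congrArg Subtype.val hpq
      exact hT'ind.comp_embedding ⟨fun p : T => (⟨coeR p.1, hmemT' p⟩ : T'), hinj'⟩
    rw [Finset.convexHull_eq] at haT'
    obtain ⟨w, hw0, hw1, hwc⟩ := haT'
    have hwa : ∑ y ∈ T', w y • y = a := by
      rw [← hwc, Finset.centerMass_eq_of_sum_1 T' id hw1]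
      rfl
    have hinj : Set.InjOn (coeR (n := n)) (T : Set (Fin n → ℤ)) := fun p _ q _ h => S7.coeR_injective h
    set μ : (Fin n → ℤ) → ℝ := fun x => ((k * c : ℕ) : ℝ) * w (coeR x) with hμ
    have hrep : S7.GoodRep V ((k * c : ℕ) : ℝ) v := by
      refine ⟨T, hTV, hind, μ, ?_, ?_, ?_⟩
      · intro x hx
        have hxT' : coeR x ∈ T' := by rw [← hTim]; exact Finset.mem_image_of_mem coeR hx
        have := hw0 _ hxT'
        rw [hμ]
        positivity
      · rw [hμ]
        rw [← Finset.mul_sum]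
        have : ∑ x ∈ T, w (coeR x) = ∑ y ∈ T', w y := by
          rw [← hTim, Finset.sum_image (fun p hp q hq h => hinj hp hq h)]
        rw [this, hw1, mul_one]
      · rw [hvrep, ← hwa, hμ]
        rw [← hTim, Finset.sum_image (fun p hp q hq h => hinj hp hq h)]
        rw [Finset.smul_sum]
        refine Finset.sum_congr rfl fun x hx => ?_
        rw [smul_smul]
    obtain ⟨ww, hww1, hww2⟩ := S7.main_induction hn2 V k hk v hrep
    refine ⟨ww, fun j => ?_, hww2⟩
    exact S7.goodRep_mem V A hA c hc1 (hww1 j)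
end
end

section
/- Let I be an ideal of ℂ[x₁,…,xₙ] such that the quotient ring R = ℂ[x₁,…,xₙ]/I is a finite-dimensional ℂ-vector space, and let f ∈ ℂ[x₁,…,xₙ]. Let M_f : R → R be the ℂ-linear multiplication operator M_f(ḡ) = f·g (classes taken modulo I). Then a complex number λ is an eigenvalue of M_f if and only if there exists a point ξ ∈ ℂⁿ in the zero locus V(I) = {ξ ∈ ℂⁿ : g(ξ) = 0 for all g ∈ I} with f(ξ) = λ. -/
noncomputable section

open MvPolynomial

lemma aux_aeval_eq_eval {n : ℕ} (ξ : Fin n → ℂ) (g : MvPolynomial (Fin n) ℂ) :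
    MvPolynomial.aeval ξ g = MvPolynomial.eval ξ g := by
  rw [← MvPolynomial.coe_aeval_eq_eval]; rfl

/-- **Eigenvalue Theorem.** Let `I` be an ideal of `ℂ[x₁,…,xₙ]` with
finite-dimensional quotient `R = ℂ[x₁,…,xₙ]/I`, and `f` a polynomial. A complex
number `λ` is an eigenvalue of the multiplication operator `M_f : R → R`,
`M_f(ḡ) = f·g`, if and only if `λ = f(ξ)` for some point `ξ` of the zero locus
`V(I)`. -/
theorem statement8 (n : ℕ) (I : Ideal (MvPolynomial (Fin n) ℂ))
    [FiniteDimensional ℂ (MvPolynomial (Fin n) ℂ ⧸ I)]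
    (f : MvPolynomial (Fin n) ℂ) (lam : ℂ) :
    Module.End.HasEigenvalue
      (LinearMap.mulLeft ℂ (Ideal.Quotient.mk I f) :
        Module.End ℂ (MvPolynomial (Fin n) ℂ ⧸ I)) lam ↔
    ∃ ξ : Fin n → ℂ, (∀ g ∈ I, MvPolynomial.eval ξ g = 0) ∧
      MvPolynomial.eval ξ f = lam := by
  let R := MvPolynomial (Fin n) ℂ ⧸ I
  let u : R := Ideal.Quotient.mk I f
  -- eigenvalues of mulLeft u are the spectrum of u
  have hspec : lam ∈ spectrum ℂ (LinearMap.mulLeft ℂ u) ↔ lam ∈ spectrum ℂ u := by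
    simp only [spectrum.mem_iff, not_iff_not]
    have h1 : algebraMap ℂ (Module.End ℂ R) lam - LinearMap.mulLeft ℂ u =
        Algebra.lmul ℂ R (algebraMap ℂ R lam - u) := by
      rw [map_sub, AlgHom.commutes]; rfl
    rw [h1, Algebra.lmul_isUnit_iff]
  rw [Module.End.hasEigenvalue_iff_mem_spectrum, hspec, spectrum.mem_iff]
  constructor
  · intro h
    obtain ⟨m, hm, hmem⟩ := exists_max_ideal_of_mem_nonunits (mem_nonunits_iff.2 h)
    haveI : m.IsMaximal := hm
    letI : Field (R ⧸ m) := Ideal.Quotient.field m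
    haveI hnt : Nontrivial (R ⧸ m) := inferInstance
    haveI : Algebra.IsIntegral ℂ (R ⧸ m) := Algebra.IsIntegral.of_finite ℂ _
    have hbij : Function.Bijective (Algebra.ofId ℂ (R ⧸ m)) :=
      ⟨fun a b hab => by
        exact (algebraMap ℂ (R ⧸ m)).injective hab,
       IsAlgClosed.algebraMap_bijective_of_isIntegral.2⟩
    let e : ℂ ≃ₐ[ℂ] (R ⧸ m) := AlgEquiv.ofBijective (Algebra.ofId ℂ (R ⧸ m)) hbij
    let φ : R →ₐ[ℂ] ℂ := e.symm.toAlgHom.comp (Ideal.Quotient.mkₐ ℂ m)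
    let ψ : MvPolynomial (Fin n) ℂ →ₐ[ℂ] ℂ := φ.comp (Ideal.Quotient.mkₐ ℂ I)
    have hψ : ∀ p : MvPolynomial (Fin n) ℂ,
        ψ p = MvPolynomial.eval (fun i => ψ (X i)) p := by
      intro p
      rw [← aux_aeval_eq_eval]
      conv_lhs => rw [MvPolynomial.aeval_unique ψ]
      rfl
    refine ⟨fun i => ψ (X i), ?_, ?_⟩
    · intro g hg
      rw [← hψ g]
      have hg0 : (Ideal.Quotient.mkₐ ℂ I) g = 0 := by
        rw [Ideal.Quotient.mkₐ_eq_mk]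
        exact (Ideal.Quotient.eq_zero_iff_mem).2 hg
      show φ ((Ideal.Quotient.mkₐ ℂ I) g) = 0
      rw [hg0, map_zero]
    · have hmk : (Ideal.Quotient.mkₐ ℂ I) (MvPolynomial.C lam - f) = algebraMap ℂ R lam - u := by
        rw [Ideal.Quotient.mkₐ_eq_mk, map_sub]
        congr 1
      have hψu : ψ (MvPolynomial.C lam - f) = 0 := by
        show φ ((Ideal.Quotient.mkₐ ℂ I) (MvPolynomial.C lam - f)) = 0
        rw [hmk]
        show e.symm ((Ideal.Quotient.mkₐ ℂ m) (algebraMap ℂ R lam - u)) = 0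
        rw [show (Ideal.Quotient.mkₐ ℂ m) (algebraMap ℂ R lam - u) = 0 from
          (Ideal.Quotient.eq_zero_iff_mem).2 hmem, map_zero]
      rw [map_sub, hψ f] at hψu
      have hC : ψ (MvPolynomial.C lam) = lam := by
        rw [show (MvPolynomial.C lam : MvPolynomial (Fin n) ℂ) = algebraMap ℂ _ lam from rfl,
          AlgHom.commutes]
        exact Algebra.algebraMap_self_apply lam
      rw [hC] at hψu
      exact (sub_eq_zero.mp hψu).symm
  · rintro ⟨ξ, hξ, hfξ⟩
    intro hunit
    have hker : ∀ g ∈ I, (MvPolynomial.aeval ξ : MvPolynomial (Fin n) ℂ →ₐ[ℂ] ℂ) g = 0 := by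
      intro g hg
      rw [aux_aeval_eq_eval]
      exact hξ g hg
    let φ : R →ₐ[ℂ] ℂ := Ideal.Quotient.liftₐ I (MvPolynomial.aeval ξ) hker
    have hφu : φ u = lam := by
      show Ideal.Quotient.liftₐ I (MvPolynomial.aeval ξ) hker (Ideal.Quotient.mk I f) = lam
      show ((MvPolynomial.aeval ξ : MvPolynomial (Fin n) ℂ →ₐ[ℂ] ℂ) :
        MvPolynomial (Fin n) ℂ →+* ℂ) f = lam
      rw [show ((MvPolynomial.aeval ξ : MvPolynomial (Fin n) ℂ →ₐ[ℂ] ℂ) :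
        MvPolynomial (Fin n) ℂ →+* ℂ) f = MvPolynomial.aeval ξ f from rfl]
      rw [aux_aeval_eq_eval]
      exact hfξ
    have hφ : φ (algebraMap ℂ R lam - u) = 0 := by
      rw [map_sub, hφu, AlgHom.commutes]
      exact sub_self lam
    have h2 := hunit.map φ
    rw [hφ] at h2
    exact not_isUnit_zero h2
end
end

section
/- Let I be a radical ideal of ℂ[x₁,…,xₙ] such that R = ℂ[x₁,…,xₙ]/I is a finite-dimensional ℂ-vector space of dimension N, and suppose the classes of monomials m₀ = 1, m₁ = x₁, …, mₙ = xₙ, m_{n+1}, …, m_{N−1} form a ℂ-basis B of R. Let f = α₁x₁ + … + αₙxₙ be a linear form taking pairwise distinct values at the points of V(I), and let M be the matrix of the multiplication operator M_f(ḡ) = f·g on R with respect to the basis B. Then: (1) for every eigenvector v = (v₀, v₁, …, v_{N−1}) of the transpose Mᵀ (i.e., left eigenvector of M) with v₀ = 1, the point (v₁, …, vₙ) belongs to V(I); and (2) for every ξ ∈ V(I) there exists an eigenvector v of Mᵀ with v₀ = 1 and (v₁, …, vₙ) = ξ, namely the vector of values (m₀(ξ), m₁(ξ), …, m_{N−1}(ξ)),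 which Mᵀ scales by the eigenvalue f(ξ). -/
noncomputable section

namespace Statement9Aux

open MvPolynomial

variable {n N : ℕ} {I : Ideal (MvPolynomial (Fin n) ℂ)}

/-- Evaluation at a point of `V(I)` as an algebra hom on the quotient. -/
def chi (ξ : Fin n → ℂ) (hξ : ∀ g ∈ I, MvPolynomial.eval ξ g = 0) :
    (MvPolynomial (Fin n) ℂ ⧸ I) →ₐ[ℂ] ℂ :=
  Ideal.Quotient.liftₐ I (MvPolynomial.aeval ξ) (fun g hg => by
    have : (MvPolynomial.aeval ξ) g = MvPolynomial.eval ξ g :=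
      congrFun (congrArg DFunLike.coe (MvPolynomial.coe_aeval_eq_eval ξ)) g
    rw [this]; exact hξ g hg)

@[simp] lemma chi_mk (ξ : Fin n → ℂ) (hξ : ∀ g ∈ I, MvPolynomial.eval ξ g = 0)
    (g : MvPolynomial (Fin n) ℂ) :
    chi ξ hξ (Ideal.Quotient.mk I g) = MvPolynomial.eval ξ g := by
  simp only [chi, Ideal.Quotient.liftₐ_apply, Ideal.Quotient.lift_mk]
  exact congrFun (congrArg DFunLike.coe (MvPolynomial.coe_aeval_eq_eval ξ)) g

lemma chi_sum (B : Module.Basis (Fin N) ℂ (MvPolynomial (Fin n) ℂ ⧸ I))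
    (ξ : Fin n → ℂ) (hξ : ∀ g ∈ I, MvPolynomial.eval ξ g = 0)
    (r : MvPolynomial (Fin n) ℂ ⧸ I) :
    ∑ i, B.repr r i * chi ξ hξ (B i) = chi ξ hξ r := by
  conv_rhs => rw [← B.sum_repr r]
  rw [map_sum]
  simp [Algebra.smul_def]

end Statement9Aux

open Matrix Statement9Aux in
/-- **Eigenvector Theorem.** Let `I` be a radical ideal of
`ℂ[x₁,…,xₙ]` with `R = ℂ[x₁,…,xₙ]/I` of finite dimension `N`, and suppose the
classes of the monomials `m₀ = 1, m₁ = x₁, …, mₙ = xₙ, m_{n+1}, …, m_{N−1}` form a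
basis `B` of `R`. Let `f = α₁x₁ + … + αₙxₙ` take pairwise distinct values on
`V(I)` and let `M` be the matrix of the multiplication operator `M_f` in the
basis `B`. Then (1) every eigenvector `v` of `Mᵀ` with `v₀ = 1` yields a point
`(v₁,…,vₙ) ∈ V(I)`, and (2) every `ξ ∈ V(I)` arises this way, namely from the
vector of values `(m₀(ξ),…,m_{N−1}(ξ))`, which `Mᵀ` scales by `f(ξ)`. -/
theorem statement9 (n N : ℕ) (hnN : n + 1 ≤ N)
    (I : Ideal (MvPolynomial (Fin n) ℂ)) (hrad : I.IsRadical)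
    (m : Fin N → MvPolynomial (Fin n) ℂ)
    (hmon : ∀ i, ∃ d : Fin n →₀ ℕ, m i = MvPolynomial.monomial d 1)
    (hm0 : m ⟨0, by omega⟩ = 1)
    (hmX : ∀ i : Fin n, m ⟨(i : ℕ) + 1, by have := i.isLt; omega⟩ = MvPolynomial.X i)
    (B : Module.Basis (Fin N) ℂ (MvPolynomial (Fin n) ℂ ⧸ I))
    (hB : ∀ i, B i = Ideal.Quotient.mk I (m i))
    (α : Fin n → ℂ) (f : MvPolynomial (Fin n) ℂ)
    (hf : f = ∑ i, MvPolynomial.C (α i) * MvPolynomial.X i)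
    (hdistinct : ∀ ξ η : Fin n → ℂ, (∀ g ∈ I, MvPolynomial.eval ξ g = 0) →
      (∀ g ∈ I, MvPolynomial.eval η g = 0) →
      MvPolynomial.eval ξ f = MvPolynomial.eval η f → ξ = η) :
    -- `M` is the matrix of the multiplication operator `M_f(ḡ) = f·g` in basis `B`
    let M : Matrix (Fin N) (Fin N) ℂ :=
      LinearMap.toMatrix B B (LinearMap.mulLeft ℂ (Ideal.Quotient.mk I f))
    -- (1) every eigenvector `v` of `Mᵀ` (left eigenvector of `M`) with `v₀ = 1`
    -- yields a point `(v₁,…,vₙ)` of `V(I)`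
    (∀ (lam : ℂ) (v : Fin N → ℂ), M.transpose *ᵥ v = lam • v →
      v ⟨0, by omega⟩ = 1 →
      ∀ g ∈ I, MvPolynomial.eval
        (fun i : Fin n => v ⟨(i : ℕ) + 1, by have := i.isLt; omega⟩) g = 0) ∧
    -- (2) for every `ξ ∈ V(I)`, the vector of values `v = (m₀(ξ),…,m_{N−1}(ξ))`
    -- is an eigenvector of `Mᵀ` with eigenvalue `f(ξ)`, `v₀ = 1`, and `(v₁,…,vₙ) = ξ`
    (∀ ξ : Fin n → ℂ, (∀ g ∈ I, MvPolynomial.eval ξ g = 0) →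
      (M.transpose *ᵥ (fun i => MvPolynomial.eval ξ (m i))
          = MvPolynomial.eval ξ f • fun i => MvPolynomial.eval ξ (m i)) ∧
      MvPolynomial.eval ξ (m ⟨0, by omega⟩) = 1 ∧
      ∀ i : Fin n,
        MvPolynomial.eval ξ (m ⟨(i : ℕ) + 1, by have := i.isLt; omega⟩) = ξ i) := by
  classical
  intro M
  -- the key eigen-computation, used in both parts
  have eig : ∀ (ξ : Fin n → ℂ) (hξ : ∀ g ∈ I, MvPolynomial.eval ξ g = 0),
      M.transpose *ᵥ (fun i => MvPolynomial.eval ξ (m i))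
        = MvPolynomial.eval ξ f • fun i => MvPolynomial.eval ξ (m i) := by
    intro ξ hξ
    funext j
    have hw : ∀ i, MvPolynomial.eval ξ (m i) = chi ξ hξ (B i) := by
      intro i; rw [hB i, chi_mk]
    simp only [Matrix.mulVec, Matrix.transpose_apply, dotProduct, Pi.smul_apply,
      smul_eq_mul, M, LinearMap.toMatrix_apply, LinearMap.mulLeft_apply]
    calc ∑ i, B.repr (Ideal.Quotient.mk I f * B j) i * MvPolynomial.eval ξ (m i)
        = ∑ i, B.repr (Ideal.Quotient.mk I f * B j) i * chi ξ hξ (B i) := by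
          simp_rw [hw]
      _ = chi ξ hξ (Ideal.Quotient.mk I f * B j) := chi_sum B ξ hξ _
      _ = MvPolynomial.eval ξ f * MvPolynomial.eval ξ (m j) := by
          rw [_root_.map_mul, chi_mk, hB j, chi_mk]
  have hm0' : ∀ (ξ : Fin n → ℂ), MvPolynomial.eval ξ (m ⟨0, by omega⟩) = 1 := by
    intro ξ; rw [hm0]; simp
  have hmX' : ∀ (ξ : Fin n → ℂ) (i : Fin n),
      MvPolynomial.eval ξ (m ⟨(i : ℕ) + 1, by have := i.isLt; omega⟩) = ξ i := by
    intro ξ i; rw [hmX i]; simp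
  refine ⟨?_, fun ξ hξ => ⟨eig ξ hξ, hm0' ξ, hmX' ξ⟩⟩
  -- Part (1)
  haveI : FiniteDimensional ℂ (MvPolynomial (Fin n) ℂ ⧸ I) :=
    Module.Finite.of_basis B
  set V : Set (Fin n → ℂ) := MvPolynomial.zeroLocus ℂ I with hVdef
  have hVmem : ∀ ξ : Fin n → ℂ, ξ ∈ V ↔ ∀ g ∈ I, MvPolynomial.eval ξ g = 0 :=
    fun ξ => MvPolynomial.mem_zeroLocus_iff
  -- V is finite
  have hVfin : V.Finite := by
    have key : ∀ i : Fin n, ∃ p : Polynomial ℂ, p ≠ 0 ∧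
        ∀ ξ ∈ V, Polynomial.IsRoot p (ξ i) := by
      intro i
      obtain ⟨p, hpmonic, hp0'⟩ :=
        IsIntegral.of_finite ℂ (Ideal.Quotient.mk I (MvPolynomial.X i))
      have hp0 : Polynomial.aeval (Ideal.Quotient.mk I (MvPolynomial.X i)) p = 0 := by
        rw [Polynomial.aeval_def]; exact hp0'
      refine ⟨p, hpmonic.ne_zero, fun ξ hξ => ?_⟩
      have hξ' := (hVmem ξ).1 hξ
      have h1 : Polynomial.aeval (chi ξ hξ' (Ideal.Quotient.mk I (MvPolynomial.X i))) p
          = chi ξ hξ' (Polynomial.aeval (Ideal.Quotient.mk I (MvPolynomial.X i)) p) :=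
        Polynomial.aeval_algHom_apply (chi ξ hξ') _ p
      rw [hp0, map_zero] at h1
      have h2 : chi ξ hξ' (Ideal.Quotient.mk I (MvPolynomial.X i)) = ξ i := by
        rw [chi_mk]; simp
      rw [h2] at h1
      rw [Polynomial.coe_aeval_eq_eval] at h1; exact h1
    choose p hp0 hproot using key
    have : V ⊆ Set.pi Set.univ (fun i => {x | Polynomial.IsRoot (p i) x}) := by
      intro ξ hξ i _
      exact hproot i ξ hξ
    exact Set.Finite.subset (Set.Finite.pi (fun i => Polynomial.finite_setOf_isRoot (hp0 i))) this
  haveI : Fintype V := hVfin.fintype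
  set w : V → Fin N → ℂ := fun ξ j => MvPolynomial.eval ξ.1 (m j) with hwdef
  have hVval : ∀ ξ : V, ∀ g ∈ I, MvPolynomial.eval ξ.1 g = 0 := fun ξ => (hVmem ξ.1).1 ξ.2
  -- the characters are linearly independent
  have liχ : LinearIndependent ℂ
      (fun ξ : V => ((chi ξ.1 (hVval ξ) : (MvPolynomial (Fin n) ℂ ⧸ I) →* ℂ) :
        (MvPolynomial (Fin n) ℂ ⧸ I) → ℂ)) := by
    apply (linearIndependent_monoidHom (MvPolynomial (Fin n) ℂ ⧸ I) ℂ).comp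
    intro ξ η h
    apply Subtype.ext
    funext i
    have := DFunLike.congr_fun h (Ideal.Quotient.mk I (MvPolynomial.X i))
    simpa using this
  -- hence the value vectors are linearly independent
  have li : LinearIndependent ℂ w := by
    rw [Fintype.linearIndependent_iff]
    intro c hc
    have hc' : ∀ j, ∑ ξ : V, c ξ * w ξ j = 0 := by
      intro j
      have := congrFun hc j
      simpa using this
    have hfun : ∑ ξ : V, c ξ • (fun r => chi ξ.1 (hVval ξ) r) = (0 : (MvPolynomial (Fin n) ℂ ⧸ I) → ℂ) := by
      funext r
      have expand : ∀ ξ : V, chi ξ.1 (hVval ξ) r = ∑ j, B.repr r j * w ξ j := by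
        intro ξ
        rw [← chi_sum B ξ.1 (hVval ξ) r]
        congr 1
        funext j
        rw [hB j, chi_mk]
      simp only [Finset.sum_apply, Pi.smul_apply, smul_eq_mul, Pi.zero_apply]
      calc ∑ ξ : V, c ξ * chi ξ.1 (hVval ξ) r
          = ∑ ξ : V, ∑ j, B.repr r j * (c ξ * w ξ j) := by
            refine Finset.sum_congr rfl fun ξ _ => ?_
            rw [expand ξ, Finset.mul_sum]
            refine Finset.sum_congr rfl fun j _ => by ring
        _ = ∑ j, B.repr r j * ∑ ξ : V, c ξ * w ξ j := by
            rw [Finset.sum_comm]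
            refine Finset.sum_congr rfl fun j _ => by rw [Finset.mul_sum]
        _ = 0 := by simp [hc']
    rw [Fintype.linearIndependent_iff] at liχ
    exact liχ c hfun
  -- |V| = N
  have hcard : Fintype.card V = N := by
    have h1 : Fintype.card V ≤ N := by
      have := li.fintype_card_le_finrank
      simpa [Module.finrank_fin_fun] using this
    have h2 : N ≤ Fintype.card V := by
      set ev : (MvPolynomial (Fin n) ℂ ⧸ I) →ₗ[ℂ] (V → ℂ) :=
        LinearMap.pi (fun ξ : V => (chi ξ.1 (hVval ξ)).toLinearMap) with hev
      have hinj : Function.Injective ev := by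
        rw [← LinearMap.ker_eq_bot, LinearMap.ker_eq_bot']
        intro r hr
        obtain ⟨g, rfl⟩ := Ideal.Quotient.mk_surjective r
        rw [Ideal.Quotient.eq_zero_iff_mem]
        have hvan : g ∈ MvPolynomial.vanishingIdeal ℂ V := by
          rw [MvPolynomial.mem_vanishingIdeal_iff]
          intro ξ hξ
          have := congrFun hr ⟨ξ, hξ⟩
          simpa [ev, LinearMap.pi_apply] using this
        rw [hVdef, MvPolynomial.vanishingIdeal_zeroLocus_eq_radical] at hvan
        exact hrad hvan
      have := LinearMap.finrank_le_finrank_of_injective hinj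
      rw [Module.finrank_eq_card_basis B] at this
      simpa [Module.finrank_pi] using this
    omega
  haveI : Nonempty V := by
    rw [← Fintype.card_pos_iff, hcard]; omega
  set bW : Module.Basis V ℂ (Fin N → ℂ) :=
    basisOfLinearIndependentOfCardEqFinrank li
      (by rw [hcard, Module.finrank_fin_fun]) with hbW
  have hbWcoe : ⇑bW = w := coe_basisOfLinearIndependentOfCardEqFinrank li _
  intro lam v hv hv0 g hg
  set c : V → ℂ := fun ξ => bW.repr v ξ with hcdef
  have hrepr : ∑ ξ : V, c ξ • w ξ = v := by
    conv_rhs => rw [← bW.sum_repr v]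
    simp [hbWcoe, hcdef]
  -- eigen equation on coefficients
  have hcoef : ∀ ξ : V, c ξ * MvPolynomial.eval ξ.1 f = lam * c ξ := by
    have e1 : M.transpose *ᵥ v = ∑ ξ : V, (c ξ * MvPolynomial.eval ξ.1 f) • w ξ := by
      rw [← hrepr]
      rw [show M.transpose *ᵥ (∑ ξ : V, c ξ • w ξ)
          = ∑ ξ : V, c ξ • (M.transpose *ᵥ w ξ) from by
        rw [← Matrix.mulVecLin_apply, map_sum]
        exact Finset.sum_congr rfl fun ξ _ => by
          rw [_root_.map_smul, Matrix.mulVecLin_apply]]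
      refine Finset.sum_congr rfl fun ξ _ => ?_
      rw [show M.transpose *ᵥ w ξ = MvPolynomial.eval ξ.1 f • w ξ from eig ξ.1 (hVval ξ)]
      rw [smul_smul, mul_comm]
    have e2 : lam • v = ∑ ξ : V, (lam * c ξ) • w ξ := by
      rw [← hrepr, Finset.smul_sum]
      refine Finset.sum_congr rfl fun ξ _ => by rw [smul_smul]
    have e3 : ∑ ξ : V, ((c ξ * MvPolynomial.eval ξ.1 f) - (lam * c ξ)) • w ξ = 0 := by
      simp only [sub_smul, Finset.sum_sub_distrib, ← e1, ← e2, hv, sub_self]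
    rw [Fintype.linearIndependent_iff] at li
    intro ξ
    exact sub_eq_zero.mp (li _ e3 ξ)
  -- the sum of coefficients is 1
  have hsum1 : ∑ ξ : V, c ξ = 1 := by
    have h0 := congrFun hrepr ⟨0, by omega⟩
    rw [hv0] at h0
    rw [← h0]
    simp only [Finset.sum_apply, Pi.smul_apply, smul_eq_mul, hwdef, hm0', mul_one]
  obtain ⟨ξ₀, hξ₀⟩ : ∃ ξ₀ : V, c ξ₀ ≠ 0 := by
    by_contra h
    push_neg at h
    rw [Finset.sum_congr rfl (fun ξ _ => h ξ)] at hsum1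
    simp at hsum1
  have hlam : lam = MvPolynomial.eval ξ₀.1 f := by
    have h := hcoef ξ₀
    rw [mul_comm (c ξ₀) _] at h
    exact (mul_right_cancel₀ hξ₀ h).symm
  have hzero : ∀ ξ : V, ξ ≠ ξ₀ → c ξ = 0 := by
    intro ξ hne
    by_contra hcξ
    have h := hcoef ξ
    rw [mul_comm (c ξ) _] at h
    have heq : MvPolynomial.eval ξ.1 f = lam := mul_right_cancel₀ hcξ h
    rw [hlam] at heq
    exact hne (Subtype.ext (hdistinct ξ.1 ξ₀.1 (hVval ξ) (hVval ξ₀) heq))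
  have hc1 : c ξ₀ = 1 := by
    rw [← hsum1, Finset.sum_eq_single ξ₀ (fun ξ _ hne => hzero ξ hne) (by simp)]
  have hveq : ∀ j, v j = w ξ₀ j := by
    intro j
    have h := congrFun hrepr j
    rw [← h]
    simp only [Finset.sum_apply, Pi.smul_apply, smul_eq_mul]
    rw [Finset.sum_eq_single ξ₀ (fun ξ _ hne => by rw [hzero ξ hne, zero_mul]) (by simp),
      hc1, one_mul]
  have hpt : (fun i : Fin n => v ⟨(i : ℕ) + 1, by have := i.isLt; omega⟩) = ξ₀.1 := by
    funext i
    rw [hveq]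
    exact hmX' ξ₀.1 i
  rw [hpt]
  exact hVval ξ₀ g hg

end
end

section
/- Let S_d ⊆ ℂ[x₁,x₂] denote the space of polynomials of total degree at most d, let f₁ = 1 − x₁x₂ and f₂ = 1 − x₂, and for an integer e ≥ 2 let Φ : S_{e−2} × S_{e−1} → S_e be the linear map Φ(g₁, g₂) = g₁·(1 − x₁x₂) + g₂·(1 − x₂). Then the classes of the monomials 1 and x₁^e in the quotient S_e/(im Φ) are linearly independent; in particular, the codimension of the image of Φ in S_e is at least 2, even though dim_ℂ ℂ[x₁,x₂]/⟨1 − x₁x₂, 1 − x₂⟩ = 1. -/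
noncomputable section

open MvPolynomial LaurentPolynomial

lemma Lsub_coeff_eq_zero (p : MvPolynomial (Fin 2) ℂ) (n : ℤ)
    (h : (p.totalDegree : ℤ) < n) :
    (MvPolynomial.aeval ![T 1, T (-1)] p : LaurentPolynomial ℂ).coeff n = 0 := by
  rw [aeval_def, eval₂_eq']
  rw [show ((∑ d ∈ p.support, (algebraMap ℂ (LaurentPolynomial ℂ)) (coeff d p) *
      ∏ i, (![T 1, T (-1)] : Fin 2 → LaurentPolynomial ℂ) i ^ d i).coeff n)
    = ∑ d ∈ p.support, ((algebraMap ℂ (LaurentPolynomial ℂ)) (coeff d p) *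
      ∏ i, (![T 1, T (-1)] : Fin 2 → LaurentPolynomial ℂ) i ^ d i).coeff n from by
    rw [AddMonoidAlgebra.coeff_sum, Finsupp.finset_sum_apply]]
  refine Finset.sum_eq_zero fun d hd => ?_
  have hterm : ((algebraMap ℂ (LaurentPolynomial ℂ)) (coeff d p) *
      ∏ i, (![T 1, T (-1)] : Fin 2 → LaurentPolynomial ℂ) i ^ d i)
      = AddMonoidAlgebra.single ((d 0 : ℤ) - (d 1 : ℤ)) (coeff d p) := by
    rw [Fin.prod_univ_two]
    simp only [Matrix.cons_val_zero, Matrix.cons_val_one, Matrix.head_cons, T_pow]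
    rw [show (algebraMap ℂ (LaurentPolynomial ℂ)) (coeff d p)
      = LaurentPolynomial.C (coeff d p) from rfl, ← mul_assoc, mul_assoc,
      ← T_add, single_eq_C_mul_T]
    ring_nf
  rw [hterm, AddMonoidAlgebra.coeff_single, Finsupp.single_apply]
  have h0 : d 0 + d 1 ≤ p.totalDegree := by
    have h1 := MvPolynomial.le_totalDegree hd
    rwa [show d.sum (fun _ e => e) = d 0 + d 1 by
      rw [Finsupp.sum_fintype _ _ (fun _ => rfl), Fin.sum_univ_two]] at h1
  have hdn : ¬ ((d 0 : ℤ) - (d 1 : ℤ)) = n := by omega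
  simp [hdn]


/-- Let `S_d ⊆ ℂ[x₁,x₂]` be the polynomials of total degree at
most `d`, and for `e ≥ 2` let `Φ : S_{e−2} × S_{e−1} → S_e` be
`Φ(g₁,g₂) = g₁·(1 − x₁x₂) + g₂·(1 − x₂)`. Then the classes of `1` and `x₁^e` in
`S_e/(im Φ)` are linearly independent; in particular the codimension of `im Φ`
in `S_e` is at least `2`, even though
`dim_ℂ ℂ[x₁,x₂]/⟨1 − x₁x₂, 1 − x₂⟩ = 1`. -/
theorem statement10 (e : ℕ) (he : 2 ≤ e) :
    -- the image of `Φ(g₁,g₂) = g₁·(1 − x₁x₂) + g₂·(1 − x₂)` on `S_{e−2} × S_{e−1}`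
    let ImPhi : Submodule ℂ (MvPolynomial (Fin 2) ℂ) :=
      Submodule.map
          (LinearMap.mulLeft ℂ (1 - MvPolynomial.X 0 * MvPolynomial.X 1))
          (MvPolynomial.restrictTotalDegree (Fin 2) ℂ (e - 2))
        + Submodule.map (LinearMap.mulLeft ℂ (1 - MvPolynomial.X 1))
            (MvPolynomial.restrictTotalDegree (Fin 2) ℂ (e - 1))
    -- `S_e`
    let Se : Submodule ℂ (MvPolynomial (Fin 2) ℂ) :=
      MvPolynomial.restrictTotalDegree (Fin 2) ℂ e
    -- the classes of `1` and `x₁^e` are linearly independent modulo `im Φ`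
    (∀ a b : ℂ,
      a • (1 : MvPolynomial (Fin 2) ℂ) + b • (MvPolynomial.X 0 : _) ^ e ∈ ImPhi →
        a = 0 ∧ b = 0) ∧
    -- in particular the codimension of `im Φ` in `S_e` is at least `2`
    2 ≤ Module.finrank ℂ (↥Se ⧸ (ImPhi.comap Se.subtype)) ∧
    -- even though `dim_ℂ ℂ[x₁,x₂]/⟨1 − x₁x₂, 1 − x₂⟩ = 1`
    Module.finrank ℂ (MvPolynomial (Fin 2) ℂ ⧸
      Ideal.span {(1 - MvPolynomial.X 0 * MvPolynomial.X 1 : MvPolynomial (Fin 2) ℂ),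
        (1 - MvPolynomial.X 1 : MvPolynomial (Fin 2) ℂ)}) = 1 := by
  intro ImPhi Se
  have key : ∀ a b : ℂ,
      a • (1 : MvPolynomial (Fin 2) ℂ) + b • (MvPolynomial.X 0 : _) ^ e ∈ ImPhi →
        a = 0 ∧ b = 0 := by
    intro a b hab
    rw [show ImPhi = _ + _ from rfl, Submodule.add_eq_sup, Submodule.mem_sup] at hab
    obtain ⟨y, hy, z, hz, hyz⟩ := hab
    obtain ⟨g₁, hg₁, rfl⟩ := hy
    obtain ⟨g₂, hg₂, rfl⟩ := hz
    rw [LinearMap.mulLeft_apply, LinearMap.mulLeft_apply] at hyz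
    replace hg₂ : g₂.totalDegree ≤ e - 1 := (mem_restrictTotalDegree _ _ _).mp hg₂
    -- functional 1 : evaluation at (1,1)
    have heval := congrArg (MvPolynomial.eval (fun _ : Fin 2 => (1:ℂ))) hyz
    simp [MvPolynomial.smul_eq_C_mul] at heval
    -- heval should give a + b = 0
    -- functional 2 : coefficient of T^e after x₀ ↦ T 1, x₁ ↦ T (-1)
    have hLaur := congrArg
      (fun q : MvPolynomial (Fin 2) ℂ =>
        (MvPolynomial.aeval ![T 1, T (-1)] q : LaurentPolynomial ℂ).coeff (e : ℤ)) hyz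
    have hA1 : (MvPolynomial.aeval (R := ℂ) ![(T 1 : LaurentPolynomial ℂ), T (-1)]
        (1 - MvPolynomial.X 0 * MvPolynomial.X 1) : LaurentPolynomial ℂ) = 0 := by
      simp only [map_sub, map_one, map_mul, aeval_X, Matrix.cons_val_zero,
        Matrix.cons_val_one, Matrix.head_cons]
      rw [← T_add, show (1:ℤ) + -1 = 0 by ring, T_zero, sub_self]
    have hg2c : ∀ n : ℤ, (e : ℤ) ≤ n →
        (MvPolynomial.aeval ![T 1, T (-1)] g₂ : LaurentPolynomial ℂ).coeff n = 0 := by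
      intro n hn
      refine Lsub_coeff_eq_zero _ _ ?_
      have : g₂.totalDegree ≤ e - 1 := hg₂
      have : g₂.totalDegree < e := by omega
      omega
    simp only [map_add, map_mul, hA1, zero_mul, map_sub, map_one, aeval_X, map_smul,
      map_pow, map_one, zero_add, Matrix.cons_val_one, Matrix.head_cons,
      Matrix.cons_val_zero] at hLaur
    rw [sub_mul, one_mul, T_pow, mul_one] at hLaur
    have hL0 : (((MvPolynomial.aeval (R := ℂ) ![(T 1 : LaurentPolynomial ℂ), T (-1)]) g₂
        - T (-1) * (MvPolynomial.aeval (R := ℂ) ![(T 1 : LaurentPolynomial ℂ), T (-1)]) g₂ :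
        LaurentPolynomial ℂ)).coeff ((e : ℤ)) = 0 := by
      rw [AddMonoidAlgebra.coeff_sub, Finsupp.sub_apply]
      rw [show ((T (-1) * (MvPolynomial.aeval (R := ℂ)
            ![(T 1 : LaurentPolynomial ℂ), T (-1)]) g₂ : LaurentPolynomial ℂ).coeff (e:ℤ))
        = (1:ℂ) * ((MvPolynomial.aeval (R := ℂ) ![(T 1 : LaurentPolynomial ℂ), T (-1)]) g₂ :
            LaurentPolynomial ℂ).coeff (-(-1) + (e:ℤ)) from
          AddMonoidAlgebra.coeff_single_mul_apply _ 1 (-1) (e:ℤ)]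
      rw [hg2c (e:ℤ) le_rfl, hg2c (-(-1) + (e:ℤ)) (by omega)]
      simp
    rw [hL0] at hLaur
    have hRHS : ((a • (1:LaurentPolynomial ℂ) + b • T (e:ℤ)) : LaurentPolynomial ℂ).coeff (e:ℤ)
        = b := by
      rw [AddMonoidAlgebra.coeff_add, AddMonoidAlgebra.coeff_smul, AddMonoidAlgebra.coeff_smul,
        Finsupp.add_apply, Finsupp.smul_apply, Finsupp.smul_apply]
      rw [show (1 : LaurentPolynomial ℂ) = AddMonoidAlgebra.single (0:ℤ) (1:ℂ) from rfl]
      rw [show (T (e:ℤ) : LaurentPolynomial ℂ) = AddMonoidAlgebra.single (e:ℤ) (1:ℂ) from rfl]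
      rw [AddMonoidAlgebra.coeff_single, AddMonoidAlgebra.coeff_single,
        Finsupp.single_apply, Finsupp.single_apply]
      have : ¬ ((0:ℤ) = (e:ℤ)) := by omega
      simp [this]
    rw [hRHS] at hLaur
    constructor
    · -- a = 0
      have hb : b = 0 := hLaur.symm
      rw [hb] at heval
      simpa using heval.symm
    · exact hLaur.symm
  refine ⟨key, ?_, ?_⟩
  · -- codimension ≥ 2
    have h1 : (1 : MvPolynomial (Fin 2) ℂ) ∈ Se := by
      rw [show Se = _ from rfl, mem_restrictTotalDegree]; simp
    have h2 : (MvPolynomial.X 0 : MvPolynomial (Fin 2) ℂ) ^ e ∈ Se := by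
      rw [show Se = _ from rfl, mem_restrictTotalDegree]
      simp [totalDegree_X_pow]
    set N := ImPhi.comap Se.subtype with hN
    set v : Fin 2 → (↥Se ⧸ N) :=
      ![Submodule.Quotient.mk ⟨1, h1⟩, Submodule.Quotient.mk ⟨MvPolynomial.X 0 ^ e, h2⟩]
      with hv
    have hli : LinearIndependent ℂ v := by
      rw [Fintype.linearIndependent_iff]
      intro g hg
      rw [Fin.sum_univ_two] at hg
      simp only [hv, Matrix.cons_val_zero, Matrix.cons_val_one, Matrix.head_cons] at hg
      rw [← Submodule.Quotient.mk_smul, ← Submodule.Quotient.mk_smul,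
        ← Submodule.Quotient.mk_add, Submodule.Quotient.mk_eq_zero] at hg
      rw [hN, Submodule.mem_comap] at hg
      have hmem : g 0 • (1 : MvPolynomial (Fin 2) ℂ) + g 1 • MvPolynomial.X 0 ^ e ∈ ImPhi := by
        simpa using hg
      obtain ⟨ha, hb⟩ := key _ _ hmem
      intro i; fin_cases i <;> assumption
    have := hli.fintype_card_le_finrank
    simpa using this
  · -- finrank of the ideal quotient is 1
    set f₁ : MvPolynomial (Fin 2) ℂ := 1 - MvPolynomial.X 0 * MvPolynomial.X 1 with hf₁
    set f₂ : MvPolynomial (Fin 2) ℂ := 1 - MvPolynomial.X 1 with hf₂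
    set I : Ideal (MvPolynomial (Fin 2) ℂ) := Ideal.span {f₁, f₂} with hI
    have hX1 : MvPolynomial.X 1 - 1 ∈ I := by
      rw [hI, Ideal.mem_span_pair]
      exact ⟨0, -1, by ring⟩
    have hX0 : MvPolynomial.X 0 - 1 ∈ I := by
      rw [hI, Ideal.mem_span_pair]
      exact ⟨-1, MvPolynomial.X 0, by ring⟩
    have hker : ∀ p ∈ I, (MvPolynomial.aeval (fun _ : Fin 2 => (1:ℂ))) p = 0 := by
      intro p hp
      have hle : I ≤ RingHom.ker (MvPolynomial.aeval (fun _ : Fin 2 => (1:ℂ))).toRingHom := by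
        rw [hI, Ideal.span_le]
        rintro q (rfl | rfl) <;> simp [RingHom.mem_ker, hf₁, hf₂]
      exact hle hp
    let φ : (MvPolynomial (Fin 2) ℂ ⧸ I) →ₐ[ℂ] ℂ :=
      Ideal.Quotient.liftₐ I (MvPolynomial.aeval (fun _ : Fin 2 => (1:ℂ))) hker
    let ψ : ℂ →ₐ[ℂ] (MvPolynomial (Fin 2) ℂ ⧸ I) := Algebra.ofId ℂ _
    have h₁ : φ.comp ψ = AlgHom.id ℂ ℂ := by
      ext
    have h₂ : ψ.comp φ = AlgHom.id ℂ (MvPolynomial (Fin 2) ℂ ⧸ I) := by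
      apply Ideal.Quotient.algHom_ext
      apply MvPolynomial.algHom_ext
      intro i
      simp only [AlgHom.comp_apply, Ideal.Quotient.mkₐ_eq_mk, AlgHom.id_apply]
      have : φ (Ideal.Quotient.mk I (MvPolynomial.X i)) = 1 := by
        simp [φ, Ideal.Quotient.liftₐ_apply]
      rw [this]
      show algebraMap ℂ _ 1 = _
      rw [map_one]
      rw [show (1 : MvPolynomial (Fin 2) ℂ ⧸ I) = Ideal.Quotient.mk I 1 from rfl,
        Ideal.Quotient.eq]
      fin_cases i
      · simpa using (I.neg_mem hX0)
      · simpa using (I.neg_mem hX1)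
    let eqv : (MvPolynomial (Fin 2) ℂ ⧸ I) ≃ₐ[ℂ] ℂ := AlgEquiv.ofAlgHom φ ψ h₁ h₂
    rw [eqv.toLinearEquiv.finrank_eq]
    exact Module.finrank_self ℂ
end
end

section
/- Let ℓ : ℝ^{n+1} × ℝ^{m+1} × ℝ^{s+1} → ℝ be a trilinear form (linear in each of its three arguments), and let (x, y, z) with ‖x‖ = ‖y‖ = ‖z‖ = 1 (Euclidean norms) be a local extremum of ℓ restricted to the product of unit spheres Sⁿ × Sᵐ × Sˢ = {(x, y, z) : ‖x‖ = ‖y‖ = ‖z‖ = 1}. Then ℓ(x_j·e_i − x_i·e_j, y, z) = 0 for all 0 ≤ i < j ≤ n, ℓ(x, y_j·e_i − y_i·e_j, z) = 0 for all 0 ≤ i < j ≤ m, and ℓ(x, y, z_j·e_i − z_i·e_j) = 0 for all 0 ≤ i < j ≤ s, where e_i denotes the i-th standard basis vector of the relevant Euclidean space. -/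
noncomputable section

open Real Filter

private lemma key_deriv (a b c : ℝ) :
    HasDerivAt (fun t : ℝ => (Real.sqrt (1 + c * t ^ 2))⁻¹ * (a + t * b)) b 0 := by
  have h1 : HasDerivAt (fun t : ℝ => 1 + c * t ^ 2) 0 0 := by
    simpa using ((hasDerivAt_pow 2 (0:ℝ)).const_mul c).const_add 1
  have h2 : HasDerivAt (fun t : ℝ => Real.sqrt (1 + c * t ^ 2)) 0 0 := by
    have := (Real.hasDerivAt_sqrt (x := 1 + c * (0:ℝ) ^ 2) (by norm_num)).comp 0 h1
    exact this.congr_deriv (by simp)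
  have h3 : HasDerivAt (fun t : ℝ => (Real.sqrt (1 + c * t ^ 2))⁻¹) 0 0 := by
    have := h2.inv (by simp)
    exact this.congr_deriv (by simp)
  have h4 : HasDerivAt (fun t : ℝ => a + t * b) b 0 := by
    exact ((hasDerivAt_const (0:ℝ) a).add ((hasDerivAt_id (0:ℝ)).mul_const b)).congr_deriv (by simp)
  have := h3.mul h4
  exact this.congr_deriv (by simp)

private lemma key (a b c : ℝ)
    (h : IsLocalMax (fun t : ℝ => (Real.sqrt (1 + c * t ^ 2))⁻¹ * (a + t * b)) 0 ∨
         IsLocalMin (fun t : ℝ => (Real.sqrt (1 + c * t ^ 2))⁻¹ * (a + t * b)) 0) :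
    b = 0 := by
  rcases h with h | h
  · exact h.hasDerivAt_eq_zero (key_deriv a b c)
  · exact h.hasDerivAt_eq_zero (key_deriv a b c)

private lemma sphere_extr {E : Type*} [NormedAddCommGroup E] [InnerProductSpace ℝ E]
    {F : E → ℝ} (hF : IsLinearMap ℝ F) {x v : E} (hx : ‖x‖ = 1)
    (hxv : inner ℝ x v = (0 : ℝ))
    (hext : IsLocalMaxOn F {u | ‖u‖ = 1} x ∨ IsLocalMinOn F {u | ‖u‖ = 1} x) :
    F v = 0 := by
  set c : ℝ := ‖v‖ ^ 2 with hc
  set γ : ℝ → E := fun t => (Real.sqrt (1 + c * t ^ 2))⁻¹ • (x + t • v) with hγ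
  have hpos : ∀ t : ℝ, 0 < 1 + c * t ^ 2 := fun t => by positivity
  have hnorm : ∀ t : ℝ, ‖x + t • v‖ = Real.sqrt (1 + c * t ^ 2) := by
    intro t
    rw [← Real.sqrt_sq (norm_nonneg (x + t • v))]
    congr 1
    rw [norm_add_sq_real, inner_smul_right, hxv, norm_smul, hx]
    simp [mul_pow, hc]; ring
  have hγ0 : γ 0 = x := by simp [hγ]
  have hmem : ∀ t, γ t ∈ {u : E | ‖u‖ = 1} := by
    intro t
    have h1 : (0:ℝ) < Real.sqrt (1 + c * t ^ 2) := Real.sqrt_pos.2 (hpos t)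
    simp only [hγ, Set.mem_setOf_eq, norm_smul, hnorm t, norm_inv,
      Real.norm_eq_abs, abs_of_pos h1]
    field_simp
  have hcont : Filter.Tendsto γ (nhds 0) (nhdsWithin x {u : E | ‖u‖ = 1}) := by
    rw [tendsto_nhdsWithin_iff]
    constructor
    · have : Continuous γ := by
        apply Continuous.smul
        · exact ((Real.continuous_sqrt.comp (by continuity)).inv₀
            fun t => ne_of_gt (Real.sqrt_pos.2 (hpos t)))
        · continuity
      simpa [hγ0] using this.tendsto 0
    · exact Filter.Eventually.of_forall hmem
  have hFγ : (F ∘ γ) = fun t : ℝ => (Real.sqrt (1 + c * t ^ 2))⁻¹ * (F x + t * F v) := by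
    funext t
    simp [hγ, Function.comp, hF.map_smul, hF.map_add]
    ring
  apply key (F x) (F v) c
  rcases hext with h | h
  · left
    have h' : IsMaxFilter F (nhdsWithin x {u : E | ‖u‖ = 1}) (γ 0) := by
      rw [hγ0]; exact h
    have := h'.comp_tendsto hcont
    rwa [hFγ] at this
  · right
    have h' : IsMinFilter F (nhdsWithin x {u : E | ‖u‖ = 1}) (γ 0) := by
      rw [hγ0]; exact h
    have := h'.comp_tendsto hcont
    rwa [hFγ] at this

/-- Let `ℓ` be a trilinear form on
`ℝ^{n+1} × ℝ^{m+1} × ℝ^{s+1}` and let `(x,y,z)` with `‖x‖ = ‖y‖ = ‖z‖ = 1` be a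
local extremum of `ℓ` restricted to the product of unit spheres. Then
`ℓ(x_j·e_i − x_i·e_j, y, z) = 0` for all `i < j`, and similarly in the second and
third arguments. -/
theorem statement11 (n m s : ℕ)
    (ℓ : EuclideanSpace ℝ (Fin (n + 1)) → EuclideanSpace ℝ (Fin (m + 1)) →
      EuclideanSpace ℝ (Fin (s + 1)) → ℝ)
    -- `ℓ` is trilinear: linear in each of its three arguments
    (hℓ1 : ∀ y z, IsLinearMap ℝ (fun x => ℓ x y z))
    (hℓ2 : ∀ x z, IsLinearMap ℝ (fun y => ℓ x y z))
    (hℓ3 : ∀ x y, IsLinearMap ℝ (fun z => ℓ x y z))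
    (x : EuclideanSpace ℝ (Fin (n + 1))) (y : EuclideanSpace ℝ (Fin (m + 1)))
    (z : EuclideanSpace ℝ (Fin (s + 1)))
    (hx : ‖x‖ = 1) (hy : ‖y‖ = 1) (hz : ‖z‖ = 1)
    -- `(x,y,z)` is a local extremum of `ℓ` on the product of unit spheres
    (hext :
      IsLocalMaxOn
        (fun p : EuclideanSpace ℝ (Fin (n + 1)) × EuclideanSpace ℝ (Fin (m + 1)) ×
            EuclideanSpace ℝ (Fin (s + 1)) => ℓ p.1 p.2.1 p.2.2)
        {p | ‖p.1‖ = 1 ∧ ‖p.2.1‖ = 1 ∧ ‖p.2.2‖ = 1} (x, y, z) ∨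
      IsLocalMinOn
        (fun p : EuclideanSpace ℝ (Fin (n + 1)) × EuclideanSpace ℝ (Fin (m + 1)) ×
            EuclideanSpace ℝ (Fin (s + 1)) => ℓ p.1 p.2.1 p.2.2)
        {p | ‖p.1‖ = 1 ∧ ‖p.2.1‖ = 1 ∧ ‖p.2.2‖ = 1} (x, y, z)) :
    (∀ i j : Fin (n + 1), i < j →
      ℓ (x j • EuclideanSpace.single i (1 : ℝ) - x i • EuclideanSpace.single j 1) y z
        = 0) ∧
    (∀ i j : Fin (m + 1), i < j →
      ℓ x (y j • EuclideanSpace.single i (1 : ℝ) - y i • EuclideanSpace.single j 1) z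
        = 0) ∧
    (∀ i j : Fin (s + 1), i < j →
      ℓ x y (z j • EuclideanSpace.single i (1 : ℝ) - z i • EuclideanSpace.single j 1)
        = 0) := by
  set S : Set (EuclideanSpace ℝ (Fin (n + 1)) × EuclideanSpace ℝ (Fin (m + 1)) ×
      EuclideanSpace ℝ (Fin (s + 1))) :=
    {p | ‖p.1‖ = 1 ∧ ‖p.2.1‖ = 1 ∧ ‖p.2.2‖ = 1} with hS
  refine ⟨fun i j _ => ?_, fun i j _ => ?_, fun i j _ => ?_⟩
  · -- first argument
    have hg : Filter.Tendsto (fun u : EuclideanSpace ℝ (Fin (n + 1)) => (u, y, z))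
        (nhdsWithin x {u | ‖u‖ = 1}) (nhdsWithin (x, y, z) S) := by
      rw [tendsto_nhdsWithin_iff]
      refine ⟨(continuous_id.prodMk continuous_const).continuousAt.mono_left
        nhdsWithin_le_nhds, ?_⟩
      exact eventually_mem_nhdsWithin.mono fun u hu => ⟨hu, hy, hz⟩
    have hloc : IsLocalMaxOn (fun u => ℓ u y z) {u | ‖u‖ = 1} x ∨
        IsLocalMinOn (fun u => ℓ u y z) {u | ‖u‖ = 1} x := by
      rcases hext with h | h
      · exact Or.inl (h.comp_tendsto (g := fun u => (u, y, z)) hg)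
      · exact Or.inr (h.comp_tendsto (g := fun u => (u, y, z)) hg)
    refine sphere_extr (hℓ1 y z) hx ?_ hloc
    simp [inner_sub_right, inner_smul_right, EuclideanSpace.inner_single_right]
    ring
  · -- second argument
    have hg : Filter.Tendsto (fun u : EuclideanSpace ℝ (Fin (m + 1)) => (x, u, z))
        (nhdsWithin y {u | ‖u‖ = 1}) (nhdsWithin (x, y, z) S) := by
      rw [tendsto_nhdsWithin_iff]
      refine ⟨(continuous_const.prodMk (continuous_id.prodMk
        continuous_const)).continuousAt.mono_left nhdsWithin_le_nhds, ?_⟩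
      exact eventually_mem_nhdsWithin.mono fun u hu => ⟨hx, hu, hz⟩
    have hloc : IsLocalMaxOn (fun u => ℓ x u z) {u | ‖u‖ = 1} y ∨
        IsLocalMinOn (fun u => ℓ x u z) {u | ‖u‖ = 1} y := by
      rcases hext with h | h
      · exact Or.inl (h.comp_tendsto (g := fun u => (x, u, z)) hg)
      · exact Or.inr (h.comp_tendsto (g := fun u => (x, u, z)) hg)
    refine sphere_extr (hℓ2 x z) hy ?_ hloc
    simp [inner_sub_right, inner_smul_right, EuclideanSpace.inner_single_right]
    ring
  · -- third argument
    have hg : Filter.Tendsto (fun u : EuclideanSpace ℝ (Fin (s + 1)) => (x, y, u))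
        (nhdsWithin z {u | ‖u‖ = 1}) (nhdsWithin (x, y, z) S) := by
      rw [tendsto_nhdsWithin_iff]
      refine ⟨(continuous_const.prodMk (continuous_const.prodMk
        continuous_id)).continuousAt.mono_left nhdsWithin_le_nhds, ?_⟩
      exact eventually_mem_nhdsWithin.mono fun u hu => ⟨hx, hy, hu⟩
    have hloc : IsLocalMaxOn (fun u => ℓ x y u) {u | ‖u‖ = 1} z ∨
        IsLocalMinOn (fun u => ℓ x y u) {u | ‖u‖ = 1} z := by
      rcases hext with h | h
      · exact Or.inl (h.comp_tendsto (g := fun u => (x, y, u)) hg)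
      · exact Or.inr (h.comp_tendsto (g := fun u => (x, y, u)) hg)
    refine sphere_extr (hℓ3 x y) hz ?_ hloc
    simp [inner_sub_right, inner_smul_right, EuclideanSpace.inner_single_right]
    ring
end
end
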